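/- arXiv:1304.3159 — 7 statements merged into one kernel-verified Lean document; each statement's English description precedes it below -/
import Mathlib

section
/- Let n ≥ 1 and let A and B be n×n real matrices. Then the Strang splitting approximation is locally third-order accurate: there exists a constant C ≥ 0 such that for all t ∈ [0,1], ‖exp(t·(A+B)) − exp((t/2)·A)·exp(t·B)·exp((t/2)·A)‖ ≤ C·t³, where ‖·‖ is any fixed norm on n×n matrices (e.g., the Frobenius norm). -/
open Set NormedSpace

/-- If a smooth function vanishes to second order at `0`, it is `O(t^3)` on `[0,1]`. -/
private lemma third_order_bound {E : Type*} [NormedAddCommGroup E] [NormedSpace ℝ E]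
    (g : ℝ → E) (hg : ContDiff ℝ ((⊤ : ℕ∞) : WithTop ℕ∞) g) (h0 : g 0 = 0) (h1 : deriv g 0 = 0)
    (h2 : deriv (deriv g) 0 = 0) :
    ∃ C : ℝ, 0 ≤ C ∧ ∀ t ∈ Set.Icc (0 : ℝ) 1, ‖g t‖ ≤ C * t ^ 3 := by
  have ud : UniqueDiffOn ℝ (Icc (0:ℝ) 1) := uniqueDiffOn_Icc zero_lt_one
  have hmem : (0:ℝ) ∈ Icc (0:ℝ) 1 := ⟨le_refl _, zero_le_one⟩
  have hcd : ContDiffOn ℝ ((2:ℕ) + 1) g (Icc (0:ℝ) 1) := (hg.of_le (by norm_cast)).contDiffOn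
  obtain ⟨C, hC⟩ := exists_taylor_mean_remainder_bound (n := 2) zero_le_one hcd
  have e1' : ∀ x ∈ Icc (0:ℝ) 1, iteratedDerivWithin 1 g (Icc 0 1) x = deriv g x := by
    intro x hx
    rw [iteratedDerivWithin_one]
    exact ((hg.differentiable (by simp)) x).derivWithin (ud x hx)
  have htay : ∀ t : ℝ, taylorWithinEval g 2 (Set.Icc 0 1) 0 t = 0 := by
    intro t
    have e0 : iteratedDerivWithin 0 g (Icc 0 1) 0 = 0 := by
      rw [iteratedDerivWithin_zero]; exact h0
    have e1 : iteratedDerivWithin 1 g (Icc 0 1) 0 = 0 := (e1' 0 hmem).trans h1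
    have e2 : iteratedDerivWithin 2 g (Icc 0 1) 0 = 0 := by
      rw [iteratedDerivWithin_succ,
        derivWithin_congr e1' (e1' 0 hmem),
        ((contDiff_infty_iff_deriv.mp hg).2.differentiable (by simp) 0).derivWithin (ud 0 hmem)]
      exact h2
    rw [taylor_within_apply]
    simp [Finset.sum_range_succ, e0, e1, e2]
  refine ⟨max C 0, le_max_right _ _, fun t ht => ?_⟩
  have := hC t ht
  rw [htay t, sub_zero, sub_zero] at this
  have ht3 : (0:ℝ) ≤ t ^ 3 := pow_nonneg ht.1 _
  calc ‖g t‖ ≤ C * t ^ (2+1) := this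
    _ ≤ max C 0 * t ^ 3 := by gcongr; exact le_max_left _ _

open Set NormedSpace

private lemma strang_aux {𝔸 : Type*} [NormedRing 𝔸] [NormedAlgebra ℝ 𝔸] [CompleteSpace 𝔸]
    (A B : 𝔸) :
    ∃ C : ℝ, 0 ≤ C ∧ ∀ t ∈ Set.Icc (0 : ℝ) 1,
      ‖exp (t • (A + B)) - exp ((t / 2) • A) * exp (t • B) * exp ((t / 2) • A)‖
        ≤ C * t ^ 3 := by
  set A' : 𝔸 := (2 : ℝ)⁻¹ • A with hA'
  have hhalf : ∀ t : ℝ, (t / 2) • A = t • A' := by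
    intro t; rw [hA', smul_smul, div_eq_mul_inv]
  simp only [hhalf]
  -- smoothness of the exponential curves
  have hexp : ContDiff ℝ ((⊤ : ℕ∞) : WithTop ℕ∞) (exp : 𝔸 → 𝔸) :=
    contDiff_iff_contDiffAt.mpr fun x => (NormedSpace.exp_analytic x).contDiffAt
  have hc : ∀ X : 𝔸, ContDiff ℝ ((⊤ : ℕ∞) : WithTop ℕ∞) (fun t : ℝ => exp (t • X)) :=
    fun X => hexp.comp (contDiff_id.smul contDiff_const)
  have hE := fun t : ℝ => hasDerivAt_exp_smul_const (𝕂 := ℝ) (A + B) t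
  have hP := fun t : ℝ => hasDerivAt_exp_smul_const (𝕂 := ℝ) A' t
  have hQ := fun t : ℝ => hasDerivAt_exp_smul_const (𝕂 := ℝ) B t
  have hgd : ∀ t : ℝ, HasDerivAt
      (fun u : ℝ => exp (u • (A + B)) - exp (u • A') * exp (u • B) * exp (u • A')) _ t :=
    fun t => (hE t).sub (((hP t).mul (hQ t)).mul (hP t))
  apply third_order_bound
  · exact (hc _).sub (((hc A').mul (hc B)).mul (hc A'))
  · simp
  · have hderiv := funext fun t => (hgd t).deriv
    rw [hderiv]
    simp [hA', smul_smul, smul_mul_assoc, mul_smul_comm]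
    module
  · have hderiv := funext fun t => (hgd t).deriv
    rw [hderiv]
    have hbig := ((hE 0).mul_const (A + B)).sub
      ((((((hP 0).mul_const A').mul (hQ 0)).add ((hP 0).mul ((hQ 0).mul_const B))).mul
          (hP 0)).add (((hP 0).mul (hQ 0)).mul ((hP 0).mul_const A')))
    refine hbig.deriv.trans ?_
    simp [hA', smul_smul, smul_mul_assoc, mul_smul_comm, mul_add, add_mul]
    module

open Matrix

attribute [local instance] Matrix.frobeniusNormedAddCommGroup

/-- Strang's symmetric splitting is locally third-order accurate: there is a constant `C ≥ 0`
such that for all `t ∈ [0,1]`,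
`‖exp (t•(A+B)) - exp ((t/2)•A) * exp (t•B) * exp ((t/2)•A)‖ ≤ C * t³`
(in the Frobenius norm on `n × n` real matrices). -/
theorem stmt_2 (n : ℕ) (hn : 1 ≤ n) (A B : Matrix (Fin n) (Fin n) ℝ) :
    ∃ C : ℝ, 0 ≤ C ∧ ∀ t ∈ Set.Icc (0 : ℝ) 1,
      ‖NormedSpace.exp (t • (A + B)) -
          NormedSpace.exp ((t / 2) • A) * NormedSpace.exp (t • B) *
            NormedSpace.exp ((t / 2) • A)‖ ≤ C * t ^ 3 := by
  letI : NormedRing (Matrix (Fin n) (Fin n) ℝ) := Matrix.frobeniusNormedRing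
  letI : NormedAlgebra ℝ (Matrix (Fin n) (Fin n) ℝ) := Matrix.frobeniusNormedAlgebra
  exact strang_aux A B
end

section
/- Let α < 2 be a real number with α ≠ 0 and α ≠ 1, let ν_L > 0 be real, and let z ∈ ℂ satisfy Re(z) > −ν_L. Then ∫_{−∞}^0 [e^{yz} − 1 − (e^y − 1)·z] · e^{ν_L y} · |y|^{−1−α} dy = Γ(−α)·[ (ν_L + z)^α − ν_L^α + ( ν_L^α − (ν_L + 1)^α )·z ], where Γ is the Gamma function and w^α denotes the principal complex power. (This is the symbol identity underlying the operator ℒ_L = λ_L Γ(−α_L)[ (ν_L + ∇)^{α_L} − ν_L^{α_L} + (ν_L^{α_L} − (ν_L+1)^{α_L})∇ ] for the left tail of the GTSP/CGMY/KoBoL model.) -/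
open MeasureTheory

section GTSPAux

open Set Filter Complex Topology


lemma real_aux_integrable {σ c : ℝ} (hσ : 0 < σ) (hc : 0 < c) :
    IntegrableOn (fun t : ℝ => Real.exp (-(c * t)) * t ^ (σ - 1)) (Set.Ioi 0) := by
  have h := Real.GammaIntegral_convergent hσ
  rw [← mul_zero c, ← integrableOn_Ioi_comp_mul_left_iff _ 0 hc] at h
  refine (IntegrableOn.congr_fun (h.const_mul (c ^ (1 - σ))) (fun t ht => ?_) measurableSet_Ioi)
  have ht0 : (0:ℝ) < t := ht
  rw [Real.mul_rpow hc.le ht0.le]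
  rw [← mul_assoc, mul_comm (c ^ (1-σ)), mul_assoc, ← mul_assoc (c^(1-σ)), ← Real.rpow_add hc]
  ring_nf
  rw [Real.rpow_zero]
  ring

lemma cexp_rpow_integrable {σ : ℝ} (hσ : 0 < σ) {w : ℂ} (hw : 0 < w.re) :
    IntegrableOn (fun t : ℝ => ((t ^ (σ - 1) : ℝ) : ℂ) * Complex.exp (-(w * t))) (Set.Ioi 0) := by
  apply Integrable.mono' (real_aux_integrable hσ hw)
  · apply ContinuousOn.aestronglyMeasurable _ measurableSet_Ioi
    apply ContinuousOn.mul
    · exact Complex.continuous_ofReal.comp_continuousOn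
        (fun t ht => (Real.continuousAt_rpow_const t _ (Or.inl (ne_of_gt ht))).continuousWithinAt)
    · exact (Complex.continuous_exp.comp ((continuous_const.mul Complex.continuous_ofReal).neg)).continuousOn
  · filter_upwards [ae_restrict_mem measurableSet_Ioi] with t ht
    have ht0 : (0:ℝ) < t := ht
    rw [norm_mul, Complex.norm_real, Real.norm_eq_abs, _root_.abs_of_nonneg (Real.rpow_nonneg ht0.le _),
      Complex.norm_exp]
    have : (-(w * t)).re = -(w.re * t) := by simp [Complex.mul_re]
    rw [this, mul_comm]


lemma gamma_cexp_real {σ : ℝ} (hσ : 0 < σ) {r : ℝ} (hr : 0 < r) :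
    ∫ t in Ioi (0:ℝ), ((t ^ (σ - 1) : ℝ) : ℂ) * Complex.exp (-((r:ℂ) * t))
      = (Real.Gamma σ : ℂ) * (r:ℂ) ^ (-(σ:ℂ)) := by
  have h := integral_cpow_mul_exp_neg_mul_Ioi (a := (σ:ℂ)) (by simpa using hσ) hr
  have h1 : ∀ t ∈ Ioi (0:ℝ), ((t ^ (σ - 1) : ℝ) : ℂ) * Complex.exp (-((r:ℂ) * t))
      = (t:ℂ) ^ ((σ:ℂ) - 1) * Complex.exp (-((r:ℂ) * t)) := by
    intro t ht
    congr 1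
    rw [Complex.ofReal_cpow (le_of_lt ht)]
    push_cast
    ring_nf
  rw [setIntegral_congr_fun measurableSet_Ioi h1, h, Complex.Gamma_ofReal]
  have h2 : ((1 / r : ℝ) : ℂ) ^ (σ : ℂ) = (r : ℂ) ^ (-(σ:ℂ)) := by
    rw [← Complex.ofReal_cpow (le_of_lt (by positivity : (0:ℝ) < 1/r)), one_div,
      Real.inv_rpow hr.le, ← Real.rpow_neg hr.le, Complex.ofReal_cpow hr.le]
    push_cast
    ring_nf
  rw [show ((1:ℂ) / r) = ((1 / r : ℝ) : ℂ) by push_cast; ring, h2, mul_comm]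

lemma gamma_cexp_integral {σ : ℝ} (hσ : 0 < σ) {w : ℂ} (hw : 0 < w.re) :
    ∫ t in Ioi (0:ℝ), ((t ^ (σ - 1) : ℝ) : ℂ) * Complex.exp (-(w * t))
      = (Real.Gamma σ : ℂ) * w ^ (-(σ:ℂ)) := by
  set U : Set ℂ := {z | 0 < z.re} with hUdef
  have hUopen : IsOpen U := isOpen_lt continuous_const Complex.continuous_re
  set f : ℂ → ℂ := fun z => ∫ t in Ioi (0:ℝ), ((t ^ (σ - 1) : ℝ) : ℂ) * Complex.exp (-(z * t))
    with hfdef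
  set g : ℂ → ℂ := fun z => (Real.Gamma σ : ℂ) * z ^ (-(σ:ℂ)) with hgdef
  have meas : ∀ z : ℂ, AEStronglyMeasurable
      (fun t : ℝ => ((t ^ (σ - 1) : ℝ) : ℂ) * Complex.exp (-(z * t)))
      (volume.restrict (Ioi 0)) := by
    intro z
    apply ContinuousOn.aestronglyMeasurable _ measurableSet_Ioi
    apply ContinuousOn.mul
    · exact Complex.continuous_ofReal.comp_continuousOn
        (fun t ht => (Real.continuousAt_rpow_const t _ (Or.inl (ne_of_gt ht))).continuousWithinAt)
    · exact (Complex.continuous_exp.comp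
        ((continuous_const.mul Complex.continuous_ofReal).neg)).continuousOn
  have meas' : ∀ z : ℂ, AEStronglyMeasurable
      (fun t : ℝ => ((t ^ (σ - 1) : ℝ) : ℂ) * (Complex.exp (-(z * t)) * (-(t:ℂ))))
      (volume.restrict (Ioi 0)) := by
    intro z
    apply ContinuousOn.aestronglyMeasurable _ measurableSet_Ioi
    apply ContinuousOn.mul
    · exact Complex.continuous_ofReal.comp_continuousOn
        (fun t ht => (Real.continuousAt_rpow_const t _ (Or.inl (ne_of_gt ht))).continuousWithinAt)
    · exact ((Complex.continuous_exp.comp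
        ((continuous_const.mul Complex.continuous_ofReal).neg)).mul
        Complex.continuous_ofReal.neg).continuousOn
  have hf : DifferentiableOn ℂ f U := by
    intro w₀ hw₀
    have hre : (0:ℝ) < w₀.re := hw₀
    have hεpos : 0 < w₀.re / 2 := by positivity
    have key := hasDerivAt_integral_of_dominated_loc_of_deriv_le
      (μ := volume.restrict (Ioi (0:ℝ))) (x₀ := w₀) (s := Metric.ball w₀ (w₀.re / 2))
      (F := fun z t => ((t ^ (σ - 1) : ℝ) : ℂ) * Complex.exp (-(z * t)))
      (F' := fun z t => ((t ^ (σ - 1) : ℝ) : ℂ) * (Complex.exp (-(z * t)) * (-(t:ℂ))))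
      (bound := fun t : ℝ => Real.exp (-(w₀.re / 2 * t)) * t ^ ((σ + 1) - 1))
      (Metric.ball_mem_nhds w₀ hεpos) (Eventually.of_forall meas) (cexp_rpow_integrable hσ hre) (meas' w₀) ?_
      ((real_aux_integrable (by positivity) hεpos)) ?_
    · exact key.2.differentiableAt.differentiableWithinAt
    · -- bound
      filter_upwards [ae_restrict_mem measurableSet_Ioi] with t ht x hx
      have ht0 : (0:ℝ) < t := ht
      have hxre : w₀.re / 2 ≤ x.re := by
        have h1 : |(x - w₀).re| ≤ ‖x - w₀‖ := Complex.abs_re_le_norm _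
        have h2 : ‖x - w₀‖ < w₀.re / 2 := by
          rw [← Complex.dist_eq]; exact Metric.mem_ball.mp hx
        rw [Complex.sub_re] at h1
        have := abs_le.mp (le_of_lt (lt_of_le_of_lt h1 h2))
        linarith [this.1]
      have hnorm : ‖((t ^ (σ - 1) : ℝ) : ℂ) * (Complex.exp (-(x * t)) * (-(t:ℂ)))‖
          = t ^ (σ - 1) * (Real.exp (-(x.re * t)) * t) := by
        rw [norm_mul, norm_mul, norm_neg, Complex.norm_real, Real.norm_eq_abs,
          _root_.abs_of_nonneg (Real.rpow_nonneg ht0.le _), Complex.norm_exp, Complex.norm_real, Real.norm_eq_abs,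
          _root_.abs_of_nonneg ht0.le]
        congr 2
        simp [Complex.mul_re]
      rw [hnorm]
      have h3 : Real.exp (-(x.re * t)) ≤ Real.exp (-(w₀.re / 2 * t)) := by
        apply Real.exp_le_exp.mpr
        nlinarith
      calc t ^ (σ - 1) * (Real.exp (-(x.re * t)) * t)
          ≤ t ^ (σ - 1) * (Real.exp (-(w₀.re / 2 * t)) * t) := by
            apply mul_le_mul_of_nonneg_left _ (Real.rpow_nonneg ht0.le _)
            exact mul_le_mul_of_nonneg_right h3 ht0.le
        _ = Real.exp (-(w₀.re / 2 * t)) * t ^ ((σ + 1) - 1) := by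
            rw [show (σ + 1) - 1 = (σ - 1) + 1 by ring, Real.rpow_add ht0,
              Real.rpow_one]
            ring
    · -- differentiability
      filter_upwards [ae_restrict_mem measurableSet_Ioi] with t ht x hx
      have : HasDerivAt (fun z : ℂ => -(z * (t:ℂ))) (-(t:ℂ)) x := by
        have h := ((hasDerivAt_id x).mul_const (t:ℂ)).neg
        rw [one_mul] at h
        exact h
      exact (this.cexp).const_mul _
  have hg : DifferentiableOn ℂ g U := by
    intro z hz
    have hzs : z ∈ Complex.slitPlane := Or.inl hz
    exact (((hasDerivAt_id z).cpow_const hzs).differentiableAt.const_mul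
      _).differentiableWithinAt
  have hfa : AnalyticOnNhd ℂ f U := hf.analyticOnNhd hUopen
  have hga : AnalyticOnNhd ℂ g U := hg.analyticOnNhd hUopen
  have h1U : (1:ℂ) ∈ U := by simp [hUdef]
  have freq : ∃ᶠ z in 𝓝[≠] (1:ℂ), f z = g z := by
    have hseq : Tendsto (fun n : ℕ => ((1 + ((n:ℝ)+1)⁻¹ : ℝ) : ℂ)) atTop (𝓝[≠] (1:ℂ)) := by
      apply tendsto_nhdsWithin_of_tendsto_nhds_of_eventually_within
      · have : Tendsto (fun n : ℕ => (1 + ((n:ℝ)+1)⁻¹ : ℝ)) atTop (𝓝 (1:ℝ)) := by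
          have := tendsto_one_div_add_atTop_nhds_zero_nat (𝕜 := ℝ)
          simpa [one_div] using (tendsto_const_nhds (x := (1:ℝ))).add this
        have h2 := (Complex.continuous_ofReal.tendsto 1).comp this
        rw [Complex.ofReal_one] at h2
        exact h2
      · filter_upwards with n
        simp only [mem_compl_iff, mem_singleton_iff]
        intro h
        have : (1 + ((n:ℝ)+1)⁻¹ : ℝ) = 1 := by exact_mod_cast h
        have hn : (0:ℝ) < ((n:ℝ)+1)⁻¹ := by positivity
        linarith
    apply hseq.frequently
    apply Frequently.of_forall
    intro n
    have hrpos : (0:ℝ) < 1 + ((n:ℝ)+1)⁻¹ := by positivity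
    exact gamma_cexp_real hσ hrpos
  exact hfa.eqOn_of_preconnected_of_frequently_eq hga
    (convex_halfSpace_re_gt 0).isPreconnected h1U freq hw


lemma rpow_contOn {β : ℝ} (s : Set ℝ) (hs : ∀ t ∈ s, (0:ℝ) < t) :
    ContinuousOn (fun t : ℝ => ((t ^ β : ℝ) : ℂ)) s :=
  Complex.continuous_ofReal.comp_continuousOn
    (fun t ht => (Real.continuousAt_rpow_const t _ (Or.inl (ne_of_gt (hs t ht)))).continuousWithinAt)

lemma cexp_contOn {w : ℂ} (s : Set ℝ) :
    ContinuousOn (fun t : ℝ => Complex.exp (-(w * t))) s :=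
  (Complex.continuous_exp.comp ((continuous_const.mul Complex.continuous_ofReal).neg)).continuousOn

lemma sub1_integrable {α : ℝ} (h0 : 0 < α) (h1 : α < 1) {w : ℂ} (hw : 0 < w.re) :
    IntegrableOn (fun t : ℝ => (Complex.exp (-(w * t)) - 1) * ((t ^ (-1 - α) : ℝ) : ℂ))
      (Set.Ioi 0) := by
  set δ : ℝ := min 1 (‖w‖ + 1)⁻¹ with hδdef
  have habs : (0:ℝ) ≤ ‖w‖ := norm_nonneg w
  have hδ0 : 0 < δ := lt_min one_pos (by positivity)
  have hcont : ContinuousOn (fun t : ℝ => (Complex.exp (-(w * t)) - 1) * ((t ^ (-1 - α) : ℝ) : ℂ))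
      {t : ℝ | 0 < t} := ((cexp_contOn _).sub continuousOn_const).mul
        (rpow_contOn _ (fun t ht => ht))
  rw [← Ioc_union_Ioi_eq_Ioi hδ0.le]
  apply IntegrableOn.union
  · -- on Ioc 0 δ
    apply Integrable.mono' (g := fun t : ℝ => 2 * ‖w‖ * t ^ (-α))
    · exact (((intervalIntegrable_iff_integrableOn_Ioc_of_le hδ0.le).mp
        (intervalIntegral.intervalIntegrable_rpow' (by linarith))).const_mul _)
    · exact (hcont.mono (fun t (ht : t ∈ Ioc 0 δ) => ht.1)).aestronglyMeasurable measurableSet_Ioc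
    · filter_upwards [ae_restrict_mem measurableSet_Ioc] with t ht
      have ht0 : (0:ℝ) < t := ht.1
      have habs1 : ‖-(w * t)‖ ≤ 1 := by
        rw [norm_neg, norm_mul, Complex.norm_real, Real.norm_eq_abs, _root_.abs_of_nonneg ht0.le]
        calc ‖w‖ * t ≤ ‖w‖ * (‖w‖ + 1)⁻¹ := by
              apply mul_le_mul_of_nonneg_left (le_trans ht.2 (min_le_right _ _)) habs
          _ ≤ 1 := by
              rw [mul_inv_le_iff₀ (by positivity)]
              linarith
      rw [norm_mul, Complex.norm_real, Real.norm_eq_abs,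
        _root_.abs_of_nonneg (Real.rpow_nonneg ht0.le _)]
      calc ‖Complex.exp (-(w * t)) - 1‖ * t ^ (-1 - α)
          ≤ 2 * ‖-(w * t)‖ * t ^ (-1 - α) := by
            apply mul_le_mul_of_nonneg_right (Complex.norm_exp_sub_one_le habs1)
              (Real.rpow_nonneg ht0.le _)
        _ = 2 * ‖w‖ * (t * t ^ (-1 - α)) := by
            rw [norm_neg, norm_mul, Complex.norm_real, Real.norm_eq_abs, _root_.abs_of_nonneg ht0.le]
            ring
        _ = 2 * ‖w‖ * t ^ (-α) := by
            have ht' : t * t ^ (-1 - α) = t ^ (-α) := by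
              rw [show t * t ^ (-1 - α) = t ^ (1:ℝ) * t ^ (-1 - α) by rw [Real.rpow_one],
                ← Real.rpow_add ht0]
              ring_nf
            rw [ht']
  · -- on Ioi δ
    apply Integrable.mono' (g := fun t : ℝ => 2 * t ^ (-1 - α))
    · exact (integrableOn_Ioi_rpow_of_lt (by linarith) hδ0).const_mul _
    · exact (hcont.mono (fun t (ht : t ∈ Ioi δ) => lt_trans hδ0 ht)).aestronglyMeasurable
        measurableSet_Ioi
    · filter_upwards [ae_restrict_mem measurableSet_Ioi] with t ht
      have ht0 : (0:ℝ) < t := lt_trans hδ0 ht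
      rw [norm_mul, Complex.norm_real, Real.norm_eq_abs,
        _root_.abs_of_nonneg (Real.rpow_nonneg ht0.le _)]
      apply mul_le_mul_of_nonneg_right _ (Real.rpow_nonneg ht0.le _)
      calc ‖Complex.exp (-(w * t)) - 1‖
          ≤ ‖Complex.exp (-(w * t))‖ + 1 := by
            simpa using norm_sub_le (Complex.exp (-(w * t))) 1
        _ ≤ 2 := by
            rw [Complex.norm_exp]
            have : (-(w * t)).re ≤ 0 := by
              simp only [Complex.neg_re, Complex.mul_re, Complex.ofReal_re, Complex.ofReal_im,
                mul_zero, sub_zero]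
              nlinarith [hw.le, ht0.le]
            linarith [Real.exp_le_one_iff.mpr this]

lemma gamma_cexp_sub1 {α : ℝ} (h0 : 0 < α) (h1 : α < 1) {w : ℂ} (hw : 0 < w.re) :
    ∫ t in Ioi (0:ℝ), (Complex.exp (-(w * t)) - 1) * ((t ^ (-1 - α) : ℝ) : ℂ)
      = (Real.Gamma (-α) : ℂ) * w ^ (α : ℂ) := by
  have hw0 : w ≠ 0 := fun h => by simp [h] at hw
  have hα' : (-(α:ℂ)) ≠ 0 := by
    simpa using Complex.ofReal_ne_zero.mpr (ne_of_gt h0)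
  set c : ℂ := (-(α:ℂ))⁻¹ with hcdef
  have hint2 : IntegrableOn (fun t : ℝ => ((t ^ (-α) : ℝ) : ℂ) * Complex.exp (-(w * t)))
      (Set.Ioi 0) := by
    have := cexp_rpow_integrable (σ := 1 - α) (by linarith) hw
    rwa [show (1:ℝ) - α - 1 = -α by ring] at this
  have hK : ∫ t in Ioi (0:ℝ), ((t ^ (-α) : ℝ) : ℂ) * Complex.exp (-(w * t))
      = (Real.Gamma (1 - α) : ℂ) * w ^ (((α:ℂ)) - 1) := by
    have := gamma_cexp_integral (σ := 1 - α) (by linarith) hw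
    rw [show (1:ℝ) - α - 1 = -α by ring] at this
    rw [this]
    congr 1
    push_cast
    ring
  set Φ : ℝ → ℂ := fun t => c * ((Complex.exp (-(w * t)) - 1) * ((t ^ (-α) : ℝ) : ℂ)) with hΦdef
  set f' : ℝ → ℂ := fun t => (Complex.exp (-(w * t)) - 1) * ((t ^ (-1 - α) : ℝ) : ℂ)
      - (w * c) * (((t ^ (-α) : ℝ) : ℂ) * Complex.exp (-(w * t))) with hf'def
  have hΦ0 : Φ 0 = 0 := by simp [hΦdef]
  have hderiv : ∀ t ∈ Ioi (0:ℝ), HasDerivAt Φ (f' t) t := by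
    intro t ht
    have ht0 : (0:ℝ) < t := ht
    have hA : HasDerivAt (fun t : ℝ => Complex.exp (-(w * t)) - 1)
        (Complex.exp (-(w * t)) * (-w)) t := by
      have h1 : HasDerivAt (fun z : ℂ => -(w * z)) (-w) (t:ℂ) := by
        have h := ((hasDerivAt_id ((t:ℝ):ℂ)).const_mul w).neg
        rw [mul_one] at h
        exact h
      exact (h1.cexp.comp_ofReal).sub_const 1
    have hB : HasDerivAt (fun t : ℝ => ((t ^ (-α) : ℝ) : ℂ))
        ((-α * t ^ (-α - 1) : ℝ) : ℂ) t :=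
      (Real.hasDerivAt_rpow_const (Or.inl ht0.ne')).ofReal_comp
    have := ((hA.mul hB).const_mul c)
    refine this.congr_deriv (Eq.symm ?_)
    have hc1 : (-(α:ℂ))⁻¹ * (-(α:ℂ)) = 1 := inv_mul_cancel₀ hα'
    simp only [hf'def, hcdef]
    rw [show (-1:ℝ) - α = -α - 1 by ring]
    push_cast
    linear_combination (-(Complex.exp (-(w * (t:ℝ))) - 1) * ((t ^ (-α - 1) : ℝ) : ℂ)) * hc1
  have hcont : ContinuousWithinAt Φ (Ici (0:ℝ)) 0 := by
    rw [ContinuousWithinAt, hΦ0]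
    apply squeeze_zero_norm' (a := fun t : ℝ => ‖c‖ * (2 * ‖w‖) * t ^ (1 - α))
    · have hmem : Icc (0:ℝ) (min 1 (‖w‖ + 1)⁻¹) ∈ 𝓝[Ici (0:ℝ)] 0 := by
        apply Icc_mem_nhdsGE_of_mem
        exact ⟨le_refl _, lt_min one_pos (by positivity)⟩
      filter_upwards [hmem] with t htmem
      rcases eq_or_lt_of_le htmem.1 with h | ht0
      · simp only [hΦdef, ← h]
        norm_num [Real.zero_rpow (by linarith : (1:ℝ) - α ≠ 0)]
      · have habs1 : ‖-(w * t)‖ ≤ 1 := by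
          rw [norm_neg, norm_mul, Complex.norm_real, Real.norm_eq_abs, _root_.abs_of_nonneg ht0.le]
          calc ‖w‖ * t ≤ ‖w‖ * (‖w‖ + 1)⁻¹ :=
                mul_le_mul_of_nonneg_left (le_trans htmem.2 (min_le_right _ _))
                  (norm_nonneg w)
            _ ≤ 1 := by
                rw [mul_inv_le_iff₀ (by positivity)]
                linarith
        simp only [hΦdef, norm_mul, Complex.norm_real, Real.norm_eq_abs,
          _root_.abs_of_nonneg (Real.rpow_nonneg ht0.le (-α))]
        calc ‖c‖ * (‖Complex.exp (-(w * t)) - 1‖ * t ^ (-α))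
            ≤ ‖c‖ * ((2 * ‖-(w * t)‖) * t ^ (-α)) := by
              apply mul_le_mul_of_nonneg_left _ (norm_nonneg c)
              exact mul_le_mul_of_nonneg_right (Complex.norm_exp_sub_one_le habs1)
                (Real.rpow_nonneg ht0.le _)
          _ = ‖c‖ * (2 * ‖w‖) * (t * t ^ (-α)) := by
              rw [norm_neg, norm_mul, Complex.norm_real, Real.norm_eq_abs, _root_.abs_of_nonneg ht0.le]
              ring
          _ = ‖c‖ * (2 * ‖w‖) * t ^ (1 - α) := by
              rw [show t * t ^ (-α) = t ^ (1:ℝ) * t ^ (-α) by rw [Real.rpow_one],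
                ← Real.rpow_add ht0]
              ring_nf
    · have : Tendsto (fun t : ℝ => t ^ (1 - α)) (𝓝[Ici (0:ℝ)] 0) (𝓝 0) := by
        have hc : ContinuousAt (fun t : ℝ => t ^ (1 - α)) 0 :=
          Real.continuousAt_rpow_const 0 (1 - α) (Or.inr (by linarith))
        have := hc.continuousWithinAt (s := Ici (0:ℝ))
        rwa [ContinuousWithinAt, Real.zero_rpow (by linarith : (1:ℝ) - α ≠ 0)] at this
      simpa using this.const_mul (‖c‖ * (2 * ‖w‖))
  have htop : Tendsto Φ atTop (𝓝 0) := by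
    apply squeeze_zero_norm' (a := fun t : ℝ => ‖c‖ * 2 * t ^ (-α))
    · filter_upwards [eventually_gt_atTop (0:ℝ)] with t ht0
      simp only [hΦdef, norm_mul, Complex.norm_real, Real.norm_eq_abs,
        _root_.abs_of_nonneg (Real.rpow_nonneg ht0.le (-α))]
      have h2 : ‖Complex.exp (-(w * t)) - 1‖ ≤ 2 := by
        calc ‖Complex.exp (-(w * t)) - 1‖
            ≤ ‖Complex.exp (-(w * t))‖ + 1 := by
              simpa using norm_sub_le (Complex.exp (-(w * t))) 1
          _ ≤ 2 := by
              rw [Complex.norm_exp]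
              have : (-(w * t)).re ≤ 0 := by
                simp only [Complex.neg_re, Complex.mul_re, Complex.ofReal_re, Complex.ofReal_im,
                  mul_zero, sub_zero]
                nlinarith [hw.le, ht0.le]
              linarith [Real.exp_le_one_iff.mpr this]
      calc ‖c‖ * (‖Complex.exp (-(w * t)) - 1‖ * t ^ (-α))
          ≤ ‖c‖ * (2 * t ^ (-α)) :=
            mul_le_mul_of_nonneg_left
              (mul_le_mul_of_nonneg_right h2 (Real.rpow_nonneg ht0.le _))
              (norm_nonneg c)
        _ = ‖c‖ * 2 * t ^ (-α) := by ring
    · simpa using (tendsto_rpow_neg_atTop h0).const_mul (‖c‖ * 2)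
  have f'int : IntegrableOn f' (Set.Ioi (0:ℝ)) :=
    (sub1_integrable h0 h1 hw).sub (hint2.const_mul (w * c))
  have hFTC : ∫ t in Ioi (0:ℝ), f' t = 0 - Φ 0 :=
    integral_Ioi_of_hasDerivAt_of_tendsto hcont hderiv f'int htop
  rw [hΦ0, sub_zero] at hFTC
  have hsplit : (fun t : ℝ => (Complex.exp (-(w * t)) - 1) * ((t ^ (-1 - α) : ℝ) : ℂ))
      = fun t : ℝ => f' t + (w * c) * (((t ^ (-α) : ℝ) : ℂ) * Complex.exp (-(w * t))) := by
    funext t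
    simp only [hf'def]
    ring
  rw [hsplit, integral_add f'int (hint2.const_mul (w * c)), hFTC, zero_add,
    MeasureTheory.integral_const_mul, hK]
  -- (w * c) * (Γ(1-α) * w^(α-1)) = Γ(-α) * w^α
  have hG : (Real.Gamma (1 - α) : ℂ) = -(α:ℂ) * (Real.Gamma (-α) : ℂ) := by
    rw [show (1:ℝ) - α = -α + 1 by ring, Real.Gamma_add_one (by simpa using ne_of_gt h0)]
    push_cast
    ring
  have hpow : w ^ ((α:ℂ) - 1) * w = w ^ ((α:ℂ)) := by
    rw [Complex.cpow_sub _ _ hw0, Complex.cpow_one]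
    field_simp
  have hc1 : (-(α:ℂ))⁻¹ * (-(α:ℂ)) = 1 := inv_mul_cancel₀ hα'
  rw [hG, ← hpow, hcdef]
  linear_combination (w * (Real.Gamma (-α) : ℂ) * w ^ ((α:ℂ) - 1)) * hc1

lemma sub2_integrable {α : ℝ} (h1 : 1 < α) (h2 : α < 2) {w : ℂ} (hw : 0 < w.re) :
    IntegrableOn (fun t : ℝ => (Complex.exp (-(w * t)) - 1 + w * t) * ((t ^ (-1 - α) : ℝ) : ℂ))
      (Set.Ioi 0) := by
  set δ : ℝ := min 1 (‖w‖ + 1)⁻¹ with hδdef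
  have habs : (0:ℝ) ≤ ‖w‖ := norm_nonneg w
  have hδ0 : 0 < δ := lt_min one_pos (by positivity)
  have hδ1 : δ ≤ 1 := min_le_left _ _
  have hcont : ContinuousOn
      (fun t : ℝ => (Complex.exp (-(w * t)) - 1 + w * t) * ((t ^ (-1 - α) : ℝ) : ℂ))
      {t : ℝ | 0 < t} := by
    apply ContinuousOn.mul _ (rpow_contOn _ (fun t ht => ht))
    exact ((cexp_contOn _).sub continuousOn_const).add
      ((continuous_const.mul Complex.continuous_ofReal).continuousOn)
  rw [← Ioc_union_Ioi_eq_Ioi hδ0.le]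
  apply IntegrableOn.union
  · -- on Ioc 0 δ
    apply Integrable.mono' (g := fun t : ℝ => ‖w‖ ^ 2 * t ^ (1 - α))
    · exact (((intervalIntegrable_iff_integrableOn_Ioc_of_le hδ0.le).mp
        (intervalIntegral.intervalIntegrable_rpow' (by linarith))).const_mul _)
    · exact (hcont.mono (fun t (ht : t ∈ Ioc 0 δ) => ht.1)).aestronglyMeasurable measurableSet_Ioc
    · filter_upwards [ae_restrict_mem measurableSet_Ioc] with t ht
      have ht0 : (0:ℝ) < t := ht.1
      have habst : ‖-(w * t)‖ = ‖w‖ * t := by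
        rw [norm_neg, norm_mul, Complex.norm_real, Real.norm_eq_abs, _root_.abs_of_nonneg ht0.le]
      have habs1 : ‖-(w * t)‖ ≤ 1 := by
        rw [habst]
        calc ‖w‖ * t ≤ ‖w‖ * (‖w‖ + 1)⁻¹ :=
              mul_le_mul_of_nonneg_left (le_trans ht.2 (min_le_right _ _)) habs
          _ ≤ 1 := by
              rw [mul_inv_le_iff₀ (by positivity)]
              linarith
      rw [norm_mul, Complex.norm_real, Real.norm_eq_abs,
        _root_.abs_of_nonneg (Real.rpow_nonneg ht0.le _)]
      have hkey : ‖Complex.exp (-(w * t)) - 1 + w * t‖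
          ≤ ‖-(w * t)‖ ^ 2 := by
        have := Complex.norm_exp_sub_one_sub_id_le habs1
        simpa [sub_eq_add_neg, sub_sub] using this
      calc ‖Complex.exp (-(w * t)) - 1 + w * t‖ * t ^ (-1 - α)
          ≤ ‖-(w * t)‖ ^ 2 * t ^ (-1 - α) :=
            mul_le_mul_of_nonneg_right hkey (Real.rpow_nonneg ht0.le _)
        _ = ‖w‖ ^ 2 * (t ^ (2:ℝ) * t ^ (-1 - α)) := by
            rw [habst, ← Real.rpow_two, Real.mul_rpow habs ht0.le, Real.rpow_two]
            ring
        _ = ‖w‖ ^ 2 * t ^ (1 - α) := by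
            rw [← Real.rpow_add ht0]
            ring_nf
  · -- on Ioi δ
    apply Integrable.mono' (g := fun t : ℝ => (2 / δ + ‖w‖) * t ^ (-α))
    · exact (integrableOn_Ioi_rpow_of_lt (by linarith) hδ0).const_mul _
    · exact (hcont.mono (fun t (ht : t ∈ Ioi δ) => lt_trans hδ0 ht)).aestronglyMeasurable
        measurableSet_Ioi
    · filter_upwards [ae_restrict_mem measurableSet_Ioi] with t ht
      have ht0 : (0:ℝ) < t := lt_trans hδ0 ht
      have htδ : δ ≤ t := (le_of_lt ht)
      rw [norm_mul, Complex.norm_real, Real.norm_eq_abs,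
        _root_.abs_of_nonneg (Real.rpow_nonneg ht0.le _)]
      have h2exp : ‖Complex.exp (-(w * t)) - 1‖ ≤ 2 := by
        calc ‖Complex.exp (-(w * t)) - 1‖
            ≤ ‖Complex.exp (-(w * t))‖ + 1 := by
              simpa using norm_sub_le (Complex.exp (-(w * t))) 1
          _ ≤ 2 := by
              rw [Complex.norm_exp]
              have : (-(w * t)).re ≤ 0 := by
                simp only [Complex.neg_re, Complex.mul_re, Complex.ofReal_re, Complex.ofReal_im,
                  mul_zero, sub_zero]
                nlinarith [hw.le, ht0.le]
              linarith [Real.exp_le_one_iff.mpr this]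
      have hbound : ‖Complex.exp (-(w * t)) - 1 + w * t‖
          ≤ (2 / δ + ‖w‖) * t := by
        calc ‖Complex.exp (-(w * t)) - 1 + w * t‖
            ≤ ‖Complex.exp (-(w * t)) - 1‖ + ‖w * t‖ := by
              apply norm_add_le
          _ ≤ 2 + ‖w‖ * t := by
              rw [norm_mul, Complex.norm_real, Real.norm_eq_abs, _root_.abs_of_nonneg ht0.le]
              linarith
          _ ≤ (2 / δ + ‖w‖) * t := by
              have : 2 ≤ 2 / δ * t := by
                rw [div_mul_eq_mul_div, le_div_iff₀ hδ0]
                nlinarith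
              nlinarith
      calc ‖Complex.exp (-(w * t)) - 1 + w * t‖ * t ^ (-1 - α)
          ≤ ((2 / δ + ‖w‖) * t) * t ^ (-1 - α) :=
            mul_le_mul_of_nonneg_right hbound (Real.rpow_nonneg ht0.le _)
        _ = (2 / δ + ‖w‖) * t ^ (-α) := by
            have ht' : t * t ^ (-1 - α) = t ^ (-α) := by
              rw [show t * t ^ (-1 - α) = t ^ (1:ℝ) * t ^ (-1 - α) by rw [Real.rpow_one],
                ← Real.rpow_add ht0]
              ring_nf
            rw [mul_assoc, ht']

lemma gamma_cexp_sub2 {α : ℝ} (h1 : 1 < α) (h2 : α < 2) {w : ℂ} (hw : 0 < w.re) :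
    ∫ t in Ioi (0:ℝ), (Complex.exp (-(w * t)) - 1 + w * t) * ((t ^ (-1 - α) : ℝ) : ℂ)
      = (Real.Gamma (-α) : ℂ) * w ^ (α : ℂ) := by
  have hw0 : w ≠ 0 := fun h => by simp [h] at hw
  have h0 : 0 < α := by linarith
  have hα' : (-(α:ℂ)) ≠ 0 := by
    simpa using Complex.ofReal_ne_zero.mpr (ne_of_gt h0)
  set c : ℂ := (-(α:ℂ))⁻¹ with hcdef
  have hint2 : IntegrableOn (fun t : ℝ => (Complex.exp (-(w * t)) - 1) * ((t ^ (-α) : ℝ) : ℂ))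
      (Set.Ioi 0) := by
    have := sub1_integrable (α := α - 1) (by linarith) (by linarith) hw
    rwa [show -1 - (α - 1) = -α by ring] at this
  have hK : ∫ t in Ioi (0:ℝ), (Complex.exp (-(w * t)) - 1) * ((t ^ (-α) : ℝ) : ℂ)
      = (Real.Gamma (1 - α) : ℂ) * w ^ (((α:ℂ)) - 1) := by
    have := gamma_cexp_sub1 (α := α - 1) (by linarith) (by linarith) hw
    rw [show -1 - (α - 1) = -α by ring] at this
    rw [this, show -(α - 1) = 1 - α by ring]
    congr 1
    push_cast
    ring
  set Φ : ℝ → ℂ := fun t => c * ((Complex.exp (-(w * t)) - 1 + w * t) * ((t ^ (-α) : ℝ) : ℂ))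
    with hΦdef
  set f' : ℝ → ℂ := fun t => (Complex.exp (-(w * t)) - 1 + w * t) * ((t ^ (-1 - α) : ℝ) : ℂ)
      - (w * c) * ((Complex.exp (-(w * t)) - 1) * ((t ^ (-α) : ℝ) : ℂ)) with hf'def
  have hΦ0 : Φ 0 = 0 := by simp [hΦdef]
  have hderiv : ∀ t ∈ Ioi (0:ℝ), HasDerivAt Φ (f' t) t := by
    intro t ht
    have ht0 : (0:ℝ) < t := ht
    have hA : HasDerivAt (fun t : ℝ => Complex.exp (-(w * t)) - 1 + w * t)
        (Complex.exp (-(w * t)) * (-w) + w) t := by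
      have h1 : HasDerivAt (fun z : ℂ => -(w * z)) (-w) (t:ℂ) := by
        have h := ((hasDerivAt_id ((t:ℝ):ℂ)).const_mul w).neg
        rw [mul_one] at h
        exact h
      have h3 : HasDerivAt (fun t : ℝ => w * (t:ℂ)) w t := by
        have h4 : HasDerivAt (fun t : ℝ => ((t:ℝ):ℂ)) 1 t := by
          simpa using (hasDerivAt_id t).ofReal_comp
        simpa using h4.const_mul w
      exact ((h1.cexp.comp_ofReal).sub_const 1).add h3
    have hB : HasDerivAt (fun t : ℝ => ((t ^ (-α) : ℝ) : ℂ))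
        ((-α * t ^ (-α - 1) : ℝ) : ℂ) t :=
      (Real.hasDerivAt_rpow_const (Or.inl ht0.ne')).ofReal_comp
    have := ((hA.mul hB).const_mul c)
    refine this.congr_deriv (Eq.symm ?_)
    have hc1 : (-(α:ℂ))⁻¹ * (-(α:ℂ)) = 1 := inv_mul_cancel₀ hα'
    simp only [hf'def, hcdef]
    rw [show (-1:ℝ) - α = -α - 1 by ring]
    push_cast
    linear_combination (-(Complex.exp (-(w * (t:ℝ))) - 1 + w * t) * ((t ^ (-α - 1) : ℝ) : ℂ)) * hc1
  have hcont : ContinuousWithinAt Φ (Ici (0:ℝ)) 0 := by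
    rw [ContinuousWithinAt, hΦ0]
    apply squeeze_zero_norm' (a := fun t : ℝ => ‖c‖ * ‖w‖ ^ 2 * t ^ (2 - α))
    · have hmem : Icc (0:ℝ) (min 1 (‖w‖ + 1)⁻¹) ∈ 𝓝[Ici (0:ℝ)] 0 := by
        apply Icc_mem_nhdsGE_of_mem
        exact ⟨le_refl _, lt_min one_pos (by positivity)⟩
      filter_upwards [hmem] with t htmem
      rcases eq_or_lt_of_le htmem.1 with h | ht0
      · simp only [hΦdef, ← h]
        norm_num [Real.zero_rpow (by linarith : (2:ℝ) - α ≠ 0)]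
      · have habst : ‖-(w * t)‖ = ‖w‖ * t := by
          rw [norm_neg, norm_mul, Complex.norm_real, Real.norm_eq_abs, _root_.abs_of_nonneg ht0.le]
        have habs1 : ‖-(w * t)‖ ≤ 1 := by
          rw [habst]
          calc ‖w‖ * t ≤ ‖w‖ * (‖w‖ + 1)⁻¹ :=
                mul_le_mul_of_nonneg_left (le_trans htmem.2 (min_le_right _ _))
                  (norm_nonneg w)
            _ ≤ 1 := by
                rw [mul_inv_le_iff₀ (by positivity)]
                linarith
        have hkey : ‖Complex.exp (-(w * t)) - 1 + w * t‖
            ≤ ‖-(w * t)‖ ^ 2 := by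
          have := Complex.norm_exp_sub_one_sub_id_le habs1
          simpa [sub_eq_add_neg, sub_sub] using this
        simp only [hΦdef, norm_mul, Complex.norm_real, Real.norm_eq_abs,
          _root_.abs_of_nonneg (Real.rpow_nonneg ht0.le (-α))]
        calc ‖c‖ * (‖Complex.exp (-(w * t)) - 1 + w * t‖ * t ^ (-α))
            ≤ ‖c‖ * (‖-(w * t)‖ ^ 2 * t ^ (-α)) := by
              apply mul_le_mul_of_nonneg_left _ (norm_nonneg c)
              exact mul_le_mul_of_nonneg_right hkey (Real.rpow_nonneg ht0.le _)
          _ = ‖c‖ * ‖w‖ ^ 2 * (t ^ (2:ℝ) * t ^ (-α)) := by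
              rw [habst, ← Real.rpow_two, Real.mul_rpow (norm_nonneg w) ht0.le,
                Real.rpow_two]
              ring
          _ = ‖c‖ * ‖w‖ ^ 2 * t ^ (2 - α) := by
              rw [← Real.rpow_add ht0]
              ring_nf
    · have : Tendsto (fun t : ℝ => t ^ (2 - α)) (𝓝[Ici (0:ℝ)] 0) (𝓝 0) := by
        have hc : ContinuousAt (fun t : ℝ => t ^ (2 - α)) 0 :=
          Real.continuousAt_rpow_const 0 (2 - α) (Or.inr (by linarith))
        have := hc.continuousWithinAt (s := Ici (0:ℝ))
        rwa [ContinuousWithinAt, Real.zero_rpow (by linarith : (2:ℝ) - α ≠ 0)] at this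
      simpa using this.const_mul (‖c‖ * ‖w‖ ^ 2)
  have htop : Tendsto Φ atTop (𝓝 0) := by
    apply squeeze_zero_norm'
      (a := fun t : ℝ => ‖c‖ * (2 + ‖w‖) * t ^ (1 - α))
    · filter_upwards [eventually_ge_atTop (1:ℝ)] with t ht1
      have ht0 : (0:ℝ) < t := lt_of_lt_of_le one_pos ht1
      simp only [hΦdef, norm_mul, Complex.norm_real, Real.norm_eq_abs,
        _root_.abs_of_nonneg (Real.rpow_nonneg ht0.le (-α))]
      have h2exp : ‖Complex.exp (-(w * t)) - 1‖ ≤ 2 := by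
        calc ‖Complex.exp (-(w * t)) - 1‖
            ≤ ‖Complex.exp (-(w * t))‖ + 1 := by
              simpa using norm_sub_le (Complex.exp (-(w * t))) 1
          _ ≤ 2 := by
              rw [Complex.norm_exp]
              have : (-(w * t)).re ≤ 0 := by
                simp only [Complex.neg_re, Complex.mul_re, Complex.ofReal_re, Complex.ofReal_im,
                  mul_zero, sub_zero]
                nlinarith [hw.le, ht0.le]
              linarith [Real.exp_le_one_iff.mpr this]
      have hb : ‖Complex.exp (-(w * t)) - 1 + w * t‖ ≤ (2 + ‖w‖) * t := by
        calc ‖Complex.exp (-(w * t)) - 1 + w * t‖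
            ≤ ‖Complex.exp (-(w * t)) - 1‖ + ‖w * t‖ :=
              norm_add_le _ _
          _ ≤ 2 + ‖w‖ * t := by
              rw [norm_mul, Complex.norm_real, Real.norm_eq_abs, _root_.abs_of_nonneg ht0.le]
              linarith
          _ ≤ (2 + ‖w‖) * t := by nlinarith [norm_nonneg w]
      calc ‖c‖ * (‖Complex.exp (-(w * t)) - 1 + w * t‖ * t ^ (-α))
          ≤ ‖c‖ * (((2 + ‖w‖) * t) * t ^ (-α)) :=
            mul_le_mul_of_nonneg_left
              (mul_le_mul_of_nonneg_right hb (Real.rpow_nonneg ht0.le _))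
              (norm_nonneg c)
        _ = ‖c‖ * (2 + ‖w‖) * (t * t ^ (-α)) := by ring
        _ = ‖c‖ * (2 + ‖w‖) * t ^ (1 - α) := by
            rw [show t * t ^ (-α) = t ^ (1:ℝ) * t ^ (-α) by rw [Real.rpow_one],
              ← Real.rpow_add ht0]
            ring_nf
    · have := tendsto_rpow_neg_atTop (show (0:ℝ) < α - 1 by linarith)
      rw [show -(α - 1) = 1 - α by ring] at this
      simpa using this.const_mul (‖c‖ * (2 + ‖w‖))
  have f'int : IntegrableOn f' (Set.Ioi (0:ℝ)) :=
    (sub2_integrable h1 h2 hw).sub (hint2.const_mul (w * c))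
  have hFTC : ∫ t in Ioi (0:ℝ), f' t = 0 - Φ 0 :=
    integral_Ioi_of_hasDerivAt_of_tendsto hcont hderiv f'int htop
  rw [hΦ0, sub_zero] at hFTC
  have hsplit : (fun t : ℝ => (Complex.exp (-(w * t)) - 1 + w * t) * ((t ^ (-1 - α) : ℝ) : ℂ))
      = fun t : ℝ => f' t + (w * c) * ((Complex.exp (-(w * t)) - 1) * ((t ^ (-α) : ℝ) : ℂ)) := by
    funext t
    simp only [hf'def]
    ring
  rw [hsplit, integral_add f'int (hint2.const_mul (w * c)), hFTC, zero_add,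
    MeasureTheory.integral_const_mul, hK]
  have hG : (Real.Gamma (1 - α) : ℂ) = -(α:ℂ) * (Real.Gamma (-α) : ℂ) := by
    rw [show (1:ℝ) - α = -α + 1 by ring, Real.Gamma_add_one (by simpa using ne_of_gt h0)]
    push_cast
    ring
  have hpow : w ^ ((α:ℂ) - 1) * w = w ^ ((α:ℂ)) := by
    rw [Complex.cpow_sub _ _ hw0, Complex.cpow_one]
    field_simp
  have hc1 : (-(α:ℂ))⁻¹ * (-(α:ℂ)) = 1 := inv_mul_cancel₀ hα'
  rw [hG, ← hpow, hcdef]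
  linear_combination (w * (Real.Gamma (-α) : ℂ) * w ^ ((α:ℂ) - 1)) * hc1


/-- Symbol identity for the left tail of the GTSP/CGMY/KoBoL model: for `α < 2`,
`α ≠ 0`, `α ≠ 1`, `ν_L > 0` and `Re z > -ν_L`,
`∫_{-∞}^0 [e^{yz} - 1 - (e^y - 1) z] e^{ν_L y} |y|^{-1-α} dy
  = Γ(-α) [(ν_L + z)^α - ν_L^α + (ν_L^α - (ν_L + 1)^α) z]`,
where powers of complex numbers are principal powers. -/
theorem stmt_7 (α νL : ℝ) (hα : α < 2) (hα0 : α ≠ 0) (hα1 : α ≠ 1) (hν : 0 < νL)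
    (z : ℂ) (hz : -νL < z.re) :
    ∫ y in Set.Iio (0 : ℝ),
        (Complex.exp ((y : ℂ) * z) - 1 - (Complex.exp (y : ℂ) - 1) * z) *
          ((Real.exp (νL * y) * |y| ^ (-1 - α) : ℝ) : ℂ)
      = (Real.Gamma (-α) : ℂ) *
          (((νL : ℂ) + z) ^ (α : ℂ) - (νL : ℂ) ^ (α : ℂ) +
            ((νL : ℂ) ^ (α : ℂ) - ((νL : ℂ) + 1) ^ (α : ℂ)) * z) := by
  have hW1 : 0 < ((νL : ℂ) + z).re := by
    simp only [Complex.add_re, Complex.ofReal_re]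
    linarith
  have hW2 : 0 < ((νL : ℂ) + 1).re := by
    simp only [Complex.add_re, Complex.ofReal_re, Complex.one_re]
    linarith
  have hW3 : 0 < ((νL : ℂ)).re := by simpa using hν
  have hswap : (∫ y in Set.Iio (0 : ℝ),
        (Complex.exp ((y : ℂ) * z) - 1 - (Complex.exp (y : ℂ) - 1) * z) *
          ((Real.exp (νL * y) * |y| ^ (-1 - α) : ℝ) : ℂ))
      = ∫ t in Ioi (0:ℝ),
        (Complex.exp (((-t : ℝ) : ℂ) * z) - 1 - (Complex.exp ((-t : ℝ) : ℂ) - 1) * z) *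
          ((Real.exp (νL * (-t)) * |(-t : ℝ)| ^ (-1 - α) : ℝ) : ℂ) := by
    have h := integral_comp_neg_Ioi (0:ℝ) (fun y : ℝ =>
      (Complex.exp ((y : ℂ) * z) - 1 - (Complex.exp (y : ℂ) - 1) * z) *
        ((Real.exp (νL * y) * |y| ^ (-1 - α) : ℝ) : ℂ))
    rw [neg_zero, MeasureTheory.integral_Iic_eq_integral_Iio] at h
    exact h.symm
  rw [hswap]
  have hptwise : ∀ t ∈ Ioi (0:ℝ),
      (Complex.exp (((-t : ℝ) : ℂ) * z) - 1 - (Complex.exp ((-t : ℝ) : ℂ) - 1) * z) *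
          ((Real.exp (νL * (-t)) * |(-t : ℝ)| ^ (-1 - α) : ℝ) : ℂ)
      = Complex.exp (-(((νL : ℂ) + z) * t)) * ((t ^ (-1 - α) : ℝ) : ℂ)
        - z * (Complex.exp (-(((νL : ℂ) + 1) * t)) * ((t ^ (-1 - α) : ℝ) : ℂ))
        + (z - 1) * (Complex.exp (-((νL : ℂ) * t)) * ((t ^ (-1 - α) : ℝ) : ℂ)) := by
    intro t ht
    have ht0 : (0:ℝ) < t := ht
    rw [abs_neg, _root_.abs_of_pos ht0]
    have hE1 : Complex.exp (((-t : ℝ) : ℂ) * z) * Complex.exp (((νL * (-t) : ℝ) : ℂ))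
        = Complex.exp (-(((νL : ℂ) + z) * t)) := by
      rw [← Complex.exp_add]
      congr 1
      push_cast
      ring
    have hE2 : Complex.exp (((-t : ℝ) : ℂ)) * Complex.exp (((νL * (-t) : ℝ) : ℂ))
        = Complex.exp (-(((νL : ℂ) + 1) * t)) := by
      rw [← Complex.exp_add]
      congr 1
      push_cast
      ring
    have hE3 : Complex.exp (((νL * (-t) : ℝ) : ℂ)) = Complex.exp (-((νL : ℂ) * t)) := by
      congr 1
      push_cast
      ring
    rw [Complex.ofReal_mul, Complex.ofReal_exp, ← hE1, ← hE2, ← hE3]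
    ring
  rw [setIntegral_congr_fun measurableSet_Ioi hptwise]
  rcases lt_trichotomy α 0 with hneg | hzero | hpos
  · -- α < 0
    have hσ : 0 < -α := by linarith
    have hint : ∀ w : ℂ, 0 < w.re →
        IntegrableOn (fun t : ℝ => Complex.exp (-(w * t)) * ((t ^ (-1 - α) : ℝ) : ℂ))
          (Set.Ioi 0) := by
      intro w hw
      have := cexp_rpow_integrable (σ := -α) hσ hw
      rw [show -α - 1 = -1 - α by ring] at this
      exact this.congr_fun (fun t ht => mul_comm _ _) measurableSet_Ioi
    have hval : ∀ w : ℂ, 0 < w.re →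
        ∫ t in Ioi (0:ℝ), Complex.exp (-(w * t)) * ((t ^ (-1 - α) : ℝ) : ℂ)
          = (Real.Gamma (-α) : ℂ) * w ^ (α : ℂ) := by
      intro w hw
      have h := gamma_cexp_integral (σ := -α) hσ hw
      rw [show -α - 1 = -1 - α by ring, show -((-α : ℝ) : ℂ) = (α : ℂ) by push_cast; ring] at h
      rw [← h]
      exact setIntegral_congr_fun measurableSet_Ioi (fun t ht => mul_comm _ _)
    have hI1 : IntegrableOn (fun t : ℝ => Complex.exp (-(((νL : ℂ) + z) * t)) * ((t ^ (-1 - α) : ℝ) : ℂ)) (Set.Ioi 0) := hint _ hW1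
    have hI2 : IntegrableOn (fun t : ℝ => z * (Complex.exp (-(((νL : ℂ) + 1) * t)) * ((t ^ (-1 - α) : ℝ) : ℂ))) (Set.Ioi 0) := (hint _ hW2).const_mul z
    have hI3 : IntegrableOn (fun t : ℝ => (z - 1) * (Complex.exp (-((νL : ℂ) * t)) * ((t ^ (-1 - α) : ℝ) : ℂ))) (Set.Ioi 0) := (hint _ hW3).const_mul (z - 1)
    have hI12 : IntegrableOn (fun t : ℝ => Complex.exp (-(((νL : ℂ) + z) * t)) * ((t ^ (-1 - α) : ℝ) : ℂ) - z * (Complex.exp (-(((νL : ℂ) + 1) * t)) * ((t ^ (-1 - α) : ℝ) : ℂ))) (Set.Ioi 0) := hI1.sub hI2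
    rw [integral_add hI12 hI3, integral_sub hI1 hI2,
      MeasureTheory.integral_const_mul, MeasureTheory.integral_const_mul,
      hval _ hW1, hval _ hW2, hval _ hW3]
    ring
  · exact absurd hzero hα0
  · -- 0 < α
    rcases lt_or_gt_of_ne hα1 with hlt | hgt
    · -- 0 < α < 1
      have hpt2 : ∀ t ∈ Ioi (0:ℝ),
          (Complex.exp (-(((νL : ℂ) + z) * t)) * ((t ^ (-1 - α) : ℝ) : ℂ)
            - z * (Complex.exp (-(((νL : ℂ) + 1) * t)) * ((t ^ (-1 - α) : ℝ) : ℂ))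
            + (z - 1) * (Complex.exp (-((νL : ℂ) * t)) * ((t ^ (-1 - α) : ℝ) : ℂ)))
          = (Complex.exp (-(((νL : ℂ) + z) * t)) - 1) * ((t ^ (-1 - α) : ℝ) : ℂ)
            - z * ((Complex.exp (-(((νL : ℂ) + 1) * t)) - 1) * ((t ^ (-1 - α) : ℝ) : ℂ))
            + (z - 1) * ((Complex.exp (-((νL : ℂ) * t)) - 1) * ((t ^ (-1 - α) : ℝ) : ℂ)) := by
        intro t ht
        ring
      have hI1 : IntegrableOn (fun t : ℝ => (Complex.exp (-(((νL : ℂ) + z) * t)) - 1) * ((t ^ (-1 - α) : ℝ) : ℂ)) (Set.Ioi 0) := sub1_integrable hpos hlt hW1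
      have hI2 : IntegrableOn (fun t : ℝ => z * ((Complex.exp (-(((νL : ℂ) + 1) * t)) - 1) * ((t ^ (-1 - α) : ℝ) : ℂ))) (Set.Ioi 0) := (sub1_integrable hpos hlt hW2).const_mul z
      have hI3 : IntegrableOn (fun t : ℝ => (z - 1) * ((Complex.exp (-((νL : ℂ) * t)) - 1) * ((t ^ (-1 - α) : ℝ) : ℂ))) (Set.Ioi 0) := (sub1_integrable hpos hlt hW3).const_mul (z - 1)
      have hI12 : IntegrableOn (fun t : ℝ => (Complex.exp (-(((νL : ℂ) + z) * t)) - 1) * ((t ^ (-1 - α) : ℝ) : ℂ) - z * ((Complex.exp (-(((νL : ℂ) + 1) * t)) - 1) * ((t ^ (-1 - α) : ℝ) : ℂ))) (Set.Ioi 0) := hI1.sub hI2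
      rw [setIntegral_congr_fun measurableSet_Ioi hpt2,
        integral_add hI12 hI3, integral_sub hI1 hI2,
        MeasureTheory.integral_const_mul, MeasureTheory.integral_const_mul,
        gamma_cexp_sub1 hpos hlt hW1, gamma_cexp_sub1 hpos hlt hW2,
        gamma_cexp_sub1 hpos hlt hW3]
      ring
    · -- 1 < α < 2
      have hpt2 : ∀ t ∈ Ioi (0:ℝ),
          (Complex.exp (-(((νL : ℂ) + z) * t)) * ((t ^ (-1 - α) : ℝ) : ℂ)
            - z * (Complex.exp (-(((νL : ℂ) + 1) * t)) * ((t ^ (-1 - α) : ℝ) : ℂ))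
            + (z - 1) * (Complex.exp (-((νL : ℂ) * t)) * ((t ^ (-1 - α) : ℝ) : ℂ)))
          = (Complex.exp (-(((νL : ℂ) + z) * t)) - 1 + ((νL : ℂ) + z) * t)
              * ((t ^ (-1 - α) : ℝ) : ℂ)
            - z * ((Complex.exp (-(((νL : ℂ) + 1) * t)) - 1 + ((νL : ℂ) + 1) * t)
              * ((t ^ (-1 - α) : ℝ) : ℂ))
            + (z - 1) * ((Complex.exp (-((νL : ℂ) * t)) - 1 + (νL : ℂ) * t)
              * ((t ^ (-1 - α) : ℝ) : ℂ)) := by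
        intro t ht
        ring
      have hI1 : IntegrableOn (fun t : ℝ => (Complex.exp (-(((νL : ℂ) + z) * t)) - 1 + ((νL : ℂ) + z) * t) * ((t ^ (-1 - α) : ℝ) : ℂ)) (Set.Ioi 0) := sub2_integrable hgt hα hW1
      have hI2 : IntegrableOn (fun t : ℝ => z * ((Complex.exp (-(((νL : ℂ) + 1) * t)) - 1 + ((νL : ℂ) + 1) * t) * ((t ^ (-1 - α) : ℝ) : ℂ))) (Set.Ioi 0) := (sub2_integrable hgt hα hW2).const_mul z
      have hI3 : IntegrableOn (fun t : ℝ => (z - 1) * ((Complex.exp (-((νL : ℂ) * t)) - 1 + (νL : ℂ) * t) * ((t ^ (-1 - α) : ℝ) : ℂ))) (Set.Ioi 0) := (sub2_integrable hgt hα hW3).const_mul (z - 1)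
      have hI12 : IntegrableOn (fun t : ℝ => (Complex.exp (-(((νL : ℂ) + z) * t)) - 1 + ((νL : ℂ) + z) * t) * ((t ^ (-1 - α) : ℝ) : ℂ) - z * ((Complex.exp (-(((νL : ℂ) + 1) * t)) - 1 + ((νL : ℂ) + 1) * t) * ((t ^ (-1 - α) : ℝ) : ℂ))) (Set.Ioi 0) := hI1.sub hI2
      rw [setIntegral_congr_fun measurableSet_Ioi hpt2,
        integral_add hI12 hI3, integral_sub hI1 hI2,
        MeasureTheory.integral_const_mul, MeasureTheory.integral_const_mul,
        gamma_cexp_sub2 hgt hα hW1, gamma_cexp_sub2 hgt hα hW2,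
        gamma_cexp_sub2 hgt hα hW3]
      ring


end GTSPAux
end

section
/- Let ν > 1 be real and let z ∈ ℂ satisfy Re(z) < ν. Then ∫_0^∞ [e^{yz} − 1 − (e^y − 1)·z] · e^{−ν y} · y^{−1} dy = log ν − log(ν − z) + z·log((ν − 1)/ν), where log denotes the principal complex logarithm. (This is the α_R = 0 (Variance-Gamma type) special case of the symbol identity for ℒ_R in the GTSP/CGMY/KoBoL model.) -/
open MeasureTheory Set Filter

lemma stmt8_integral_cexp_Ioi {c : ℂ} (hc : c.re < 0) :
    ∫ y in Ioi (0:ℝ), Complex.exp (y * c) = -c⁻¹ := by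
  have hc0 : c ≠ 0 := by rintro rfl; simp at hc
  have hderiv : ∀ x ∈ Ici (0:ℝ), HasDerivAt (fun y : ℝ => Complex.exp (y * c) / c)
      (Complex.exp (x * c)) x := by
    intro x _
    rw [← mul_div_cancel_right₀ (Complex.exp (↑x * c)) hc0]
    apply ((Complex.hasDerivAt_exp _).comp x ?_).div_const c
    simpa using ((hasDerivAt_id (x:ℂ)).mul_const c).comp_ofReal
  have hint : IntegrableOn (fun y : ℝ => Complex.exp (y * c)) (Ioi (0:ℝ)) := by
    have h := (exp_neg_integrableOn_Ioi 0 (show 0 < -c.re by linarith))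
    refine h.mono' ?_ ?_
    · exact (Complex.continuous_exp.comp (Complex.continuous_ofReal.mul continuous_const)).aestronglyMeasurable
    · filter_upwards with y
      rw [Complex.norm_exp]
      simp [Complex.mul_re, mul_comm]
  have htend : Tendsto (fun y : ℝ => Complex.exp (y * c) / c) atTop (nhds 0) := by
    rw [tendsto_zero_iff_norm_tendsto_zero]
    have heq : (fun y : ℝ => ‖Complex.exp (↑y * c) / c‖) = fun y => Real.exp (y * c.re) / ‖c‖ := by
      funext y
      rw [norm_div, Complex.norm_exp]
      simp [Complex.mul_re]
    rw [heq]
    have h1 : Tendsto (fun y : ℝ => y * c.re) atTop atBot :=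
      Tendsto.atTop_mul_const_of_neg hc tendsto_id
    simpa using (Real.tendsto_exp_atBot.comp h1).div_const ‖c‖
  have := integral_Ioi_of_hasDerivAt_of_tendsto' hderiv hint htend
  rw [this]
  simp

lemma stmt8_frullani {ν : ℝ} (hν : 0 < ν) {w : ℂ} (hw : w.re < ν) :
    IntegrableOn
        (fun y : ℝ => (Complex.exp (y * w) - 1) * ((Real.exp (-ν * y) * y⁻¹ : ℝ) : ℂ)) (Ioi 0) ∧
      ∫ y in Ioi (0:ℝ), (Complex.exp (y * w) - 1) * ((Real.exp (-ν * y) * y⁻¹ : ℝ) : ℂ)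
        = Complex.log ν - Complex.log ((ν : ℂ) - w) := by
  obtain rfl | hw0 := eq_or_ne w 0
  · constructor
    · simp [IntegrableOn]
    · simp
  set δ : ℝ := ν - max w.re 0 with hδdef
  have hδ : 0 < δ := by
    rcases le_total w.re 0 with h | h
    · simp [hδdef, max_eq_right h, hν]
    · simp only [hδdef, max_eq_left h]; linarith
  have htb : ∀ t : ℝ, t ∈ Icc (0:ℝ) 1 → t * w.re - ν ≤ -δ := by
    intro t ht
    rcases le_total w.re 0 with h | h
    · have : t * w.re ≤ 0 := mul_nonpos_of_nonneg_of_nonpos ht.1 h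
      simp only [hδdef, max_eq_right h]; linarith
    · have : t * w.re ≤ 1 * w.re := mul_le_mul_of_nonneg_right ht.2 h
      simp only [hδdef, max_eq_left h]; nlinarith
  -- the double-integral kernel
  set g : ℝ → ℝ → ℂ := fun y t => w * Complex.exp (y * (t * w - ν)) with hg
  have hre : ∀ (y t : ℝ), ((y:ℂ) * ((t:ℂ) * w - ν)).re = y * (t * w.re - ν) := by
    intro y t; simp [Complex.mul_re]
  have hgi : Integrable (Function.uncurry g)
      ((volume.restrict (Ioi (0:ℝ))).prod (volume.restrict (Ioc (0:ℝ) 1))) := by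
    have hb : Integrable (fun p : ℝ × ℝ => (‖w‖ * Real.exp (-δ * p.1)) * 1)
        ((volume.restrict (Ioi (0:ℝ))).prod (volume.restrict (Ioc (0:ℝ) 1))) := by
      exact Integrable.mul_prod ((exp_neg_integrableOn_Ioi 0 hδ).const_mul ‖w‖)
        (integrable_const 1)
    refine hb.mono' ?_ ?_
    · apply Continuous.aestronglyMeasurable
      apply continuous_const.mul
      exact Complex.continuous_exp.comp (by fun_prop)
    · rw [Measure.prod_restrict]
      filter_upwards [ae_restrict_mem (measurableSet_Ioi.prod measurableSet_Ioc)] with p hp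
      obtain ⟨hy, ht⟩ := hp
      simp only [Function.uncurry, hg, mul_one, norm_mul,
        Complex.norm_exp, hre]
      refine mul_le_mul_of_nonneg_left ?_ (norm_nonneg w)
      apply Real.exp_le_exp.2
      have h1 : p.2 * w.re - ν ≤ -δ := htb p.2 ⟨ht.1.le, ht.2⟩
      have : p.1 * (p.2 * w.re - ν) ≤ p.1 * (-δ) :=
        mul_le_mul_of_nonneg_left h1 (le_of_lt hy)
      linarith [this]
  -- inner identity in `t`
  have h1 : ∀ y ∈ Ioi (0:ℝ),
      (∫ t in Ioc (0:ℝ) 1, g y t)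
        = (Complex.exp (y * w) - 1) * ((Real.exp (-ν * y) * y⁻¹ : ℝ) : ℂ) := by
    intro y hy
    have hy0 : (0:ℝ) < y := hy
    have hyC : (y:ℂ) ≠ 0 := Complex.ofReal_ne_zero.2 hy0.ne'
    have hyw : (y:ℂ) * w ≠ 0 := mul_ne_zero hyC hw0
    rw [← intervalIntegral.integral_of_le zero_le_one]
    have hfe : ∀ t : ℝ, g y t
        = (w * Complex.exp ((-ν * y : ℝ) : ℂ)) * Complex.exp (((y:ℂ) * w) * t) := by
      intro t
      rw [hg]; push_cast
      rw [mul_assoc, ← Complex.exp_add]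
      ring_nf
    simp only [hfe]
    rw [intervalIntegral.integral_const_mul, integral_exp_mul_complex hyw]
    have hco : ((Real.exp (-ν * y) * y⁻¹ : ℝ) : ℂ)
        = Complex.exp ((-ν * y : ℝ) : ℂ) * ((y:ℂ))⁻¹ := by
      push_cast [Complex.ofReal_exp]; ring
    rw [hco]
    push_cast
    rw [mul_one, mul_zero, Complex.exp_zero]
    field_simp
  -- integrability of the target function
  have hfi : IntegrableOn
      (fun y : ℝ => (Complex.exp (y * w) - 1) * ((Real.exp (-ν * y) * y⁻¹ : ℝ) : ℂ)) (Ioi 0) := by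
    have := hgi.integral_prod_left
    refine this.congr ?_
    filter_upwards [ae_restrict_mem measurableSet_Ioi] with y hy
    exact h1 y hy
  refine ⟨hfi, ?_⟩
  -- swap the order of integration
  have hswap := integral_integral_swap hgi
  have hL : (∫ y in Ioi (0:ℝ), ∫ t in Ioc (0:ℝ) 1, g y t)
      = ∫ y in Ioi (0:ℝ), (Complex.exp (y * w) - 1) * ((Real.exp (-ν * y) * y⁻¹ : ℝ) : ℂ) :=
    setIntegral_congr_fun measurableSet_Ioi fun y hy => h1 y hy
  -- inner identity in `y`
  have h2 : ∀ t ∈ Ioc (0:ℝ) 1,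
      (∫ y in Ioi (0:ℝ), g y t) = w * ((ν:ℂ) - t * w)⁻¹ := by
    intro t ht
    have hcre : ((t:ℂ) * w - ν).re < 0 := by
      have h := htb t ⟨ht.1.le, ht.2⟩
      have he : ((t:ℂ) * w - (ν:ℂ)).re = t * w.re - ν := by simp [Complex.mul_re]
      rw [he]; linarith
    rw [MeasureTheory.integral_const_mul, stmt8_integral_cexp_Ioi hcre]
    rw [← inv_neg]
    ring_nf
  have hR : (∫ t in Ioc (0:ℝ) 1, ∫ y in Ioi (0:ℝ), g y t)
      = ∫ t in Ioc (0:ℝ) 1, w * ((ν:ℂ) - t * w)⁻¹ :=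
    setIntegral_congr_fun measurableSet_Ioc fun t ht => h2 t ht
  -- evaluate the `t` integral by FTC
  have h3 : (∫ t in Ioc (0:ℝ) 1, w * ((ν:ℂ) - t * w)⁻¹)
      = Complex.log ν - Complex.log ((ν:ℂ) - w) := by
    rw [← intervalIntegral.integral_of_le zero_le_one]
    have hpos : ∀ t : ℝ, t ∈ uIcc (0:ℝ) 1 → 0 < ((ν:ℂ) - t * w).re := by
      intro t ht
      rw [uIcc_of_le zero_le_one] at ht
      have := htb t ht
      simp only [Complex.sub_re, Complex.mul_re, Complex.ofReal_re, Complex.ofReal_im]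
      simp only [Complex.ofReal_im, zero_mul, sub_zero]
      linarith [this, hδ]
    have hne : ∀ t : ℝ, t ∈ uIcc (0:ℝ) 1 → ((ν:ℂ) - t * w) ≠ 0 := by
      intro t ht h0
      have := hpos t ht
      rw [h0] at this
      simp at this
    have hF : ∀ t ∈ uIcc (0:ℝ) 1,
        HasDerivAt (fun s : ℝ => -Complex.log ((ν:ℂ) - s * w)) (w * ((ν:ℂ) - t * w)⁻¹) t := by
      intro t ht
      have hslit : ((ν:ℂ) - t * w) ∈ Complex.slitPlane :=
        Complex.mem_slitPlane_iff.2 (Or.inl (hpos t ht))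
      have hlin : HasDerivAt (fun s : ℂ => (ν:ℂ) - s * w) (-w) ((t:ℝ):ℂ) := by
        simpa using ((hasDerivAt_id ((t:ℝ):ℂ)).mul_const w).const_sub (ν:ℂ)
      have hlog := ((Complex.hasDerivAt_log hslit).comp ((t:ℝ):ℂ) hlin).neg.comp_ofReal
      convert hlog using 1
      · rfl
      ring
    have hcont : ContinuousOn (fun t : ℝ => w * ((ν:ℂ) - t * w)⁻¹) (uIcc (0:ℝ) 1) := by
      apply continuousOn_const.mul
      apply ContinuousOn.inv₀
      · fun_prop
      · exact hne
    rw [intervalIntegral.integral_eq_sub_of_hasDerivAt hF hcont.intervalIntegrable]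
    push_cast
    simp only [one_mul, zero_mul, sub_zero]
    ring
  rw [hL] at hswap
  rw [hswap, hR, h3]

/-- The `α_R = 0` (Variance-Gamma type) special case of the symbol identity for the
right tail of the GTSP/CGMY/KoBoL model: for `ν > 1` and `Re z < ν`,
`∫_0^∞ [e^{yz} - 1 - (e^y - 1) z] e^{-ν y} y^{-1} dy
  = log ν - log (ν - z) + z log ((ν - 1)/ν)`,
where `log` is the principal complex logarithm. -/
theorem stmt_8 (ν : ℝ) (hν : 1 < ν) (z : ℂ) (hz : z.re < ν) :
    ∫ y in Set.Ioi (0 : ℝ),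
        (Complex.exp ((y : ℂ) * z) - 1 - (Complex.exp (y : ℂ) - 1) * z) *
          ((Real.exp (-ν * y) * y⁻¹ : ℝ) : ℂ)
      = Complex.log (ν : ℂ) - Complex.log ((ν : ℂ) - z) +
          z * Complex.log (((ν : ℂ) - 1) / (ν : ℂ)) := by
  have hν0 : (0:ℝ) < ν := by linarith
  obtain ⟨hiz, hvz⟩ := stmt8_frullani hν0 hz
  obtain ⟨hi1, hv1⟩ := stmt8_frullani hν0 (show (1:ℂ).re < ν by simpa using hν)
  have hsplit : ∀ y : ℝ,
      (Complex.exp ((y : ℂ) * z) - 1 - (Complex.exp (y : ℂ) - 1) * z) *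
          ((Real.exp (-ν * y) * y⁻¹ : ℝ) : ℂ)
        = (Complex.exp (y * z) - 1) * ((Real.exp (-ν * y) * y⁻¹ : ℝ) : ℂ)
          - z * ((Complex.exp ((y:ℂ) * 1) - 1) * ((Real.exp (-ν * y) * y⁻¹ : ℝ) : ℂ)) := by
    intro y; rw [mul_one]; ring
  simp only [hsplit]
  rw [integral_sub hiz (hi1.const_mul z), MeasureTheory.integral_const_mul, hvz, hv1]
  have hlog : Complex.log (((ν : ℂ) - 1) / (ν : ℂ))
      = Complex.log ((ν : ℂ) - 1) - Complex.log (ν : ℂ) := by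
    have h1 : ((ν:ℂ) - 1) = ((ν - 1 : ℝ) : ℂ) := by push_cast; ring
    have h2 : ((ν:ℂ) - 1) / (ν:ℂ) = (((ν - 1)/ν : ℝ) : ℂ) := by push_cast; ring
    rw [h2, h1, ← Complex.ofReal_log (div_pos (by linarith) hν0).le, ← Complex.ofReal_log (by linarith : (0:ℝ) ≤ ν - 1),
      ← Complex.ofReal_log hν0.le, ← Complex.ofReal_sub,
      Real.log_div (by linarith) (by linarith)]
  rw [hlog]
  ring
end

section
/- Let ν > 1 be real and let z ∈ ℂ satisfy Re(z) < ν. Then ∫_0^∞ [e^{yz} − 1 − (e^y − 1)·z] · e^{−ν y} · y^{−2} dy = (ν − z)·log(ν − z) − ν·log ν + z·( log(ν − 1) − ν·log((ν−1)/ν) ), where log denotes the principal complex logarithm. (This is the α_R = 1 special case of the symbol identity for ℒ_R in the GTSP/CGMY/KoBoL model; the paper expresses the coefficient of z as log(ν−1) − 2ν·coth⁻¹(1−2ν), which equals log(ν−1) − ν·log((ν−1)/ν).) -/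
open MeasureTheory

section Stmt9AuxSection
open Set

namespace Stmt9Aux

lemma norm_exp_sub_exp_le (a b : ℂ) :
    ‖Complex.exp a - Complex.exp b‖ ≤ ‖a - b‖ * Real.exp (max a.re b.re) := by
  have key : ∀ t ∈ Set.uIcc (0:ℝ) 1,
      HasDerivAt (fun t : ℝ => Complex.exp (b + (t:ℂ) * (a - b)))
        ((a - b) * Complex.exp (b + (t:ℂ) * (a - b))) t := by
    intro t _
    have h1 : HasDerivAt (fun w : ℂ => Complex.exp (b + w * (a - b)))
        ((a - b) * Complex.exp (b + (t:ℂ) * (a - b))) (t:ℂ) := by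
      have := (((hasDerivAt_id ((t:ℂ))).mul_const (a - b)).const_add b).cexp
      simpa [mul_comm] using this
    exact h1.comp_ofReal
  have hcont : IntervalIntegrable
      (fun t : ℝ => (a - b) * Complex.exp (b + (t:ℂ) * (a - b))) volume 0 1 := by
    apply Continuous.intervalIntegrable
    continuity
  have hftc := intervalIntegral.integral_eq_sub_of_hasDerivAt key hcont
  have heq : Complex.exp a - Complex.exp b
      = ∫ t in (0:ℝ)..1, (a - b) * Complex.exp (b + (t:ℂ) * (a - b)) := by
    rw [hftc]; norm_num
  rw [heq]
  have := intervalIntegral.norm_integral_le_of_norm_le_const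
    (C := ‖a - b‖ * Real.exp (max a.re b.re))
    (f := fun t : ℝ => (a - b) * Complex.exp (b + (t:ℂ) * (a - b)))
    (a := 0) (b := 1) ?_
  · simpa using this
  · intro t ht
    rw [Set.uIoc_of_le (by norm_num)] at ht
    rw [norm_mul, Complex.norm_exp]
    have hre : (b + (t:ℂ) * (a - b)).re = (1 - t) * b.re + t * a.re := by
      simp [Complex.add_re, Complex.mul_re]; ring
    rw [hre]
    have h1 : (1 - t) * b.re + t * a.re ≤ max a.re b.re := by
      have h2 : a.re ≤ max a.re b.re := le_max_left _ _
      have h3 : b.re ≤ max a.re b.re := le_max_right _ _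
      nlinarith [ht.1.le, ht.2]
    exact mul_le_mul_of_nonneg_left (Real.exp_le_exp.2 h1) (norm_nonneg _)


lemma norm_exp_sub_exp_sub_le (a b : ℂ) :
    ‖Complex.exp a - Complex.exp b - (a - b) * Complex.exp b‖
      ≤ ‖a - b‖ ^ 2 * Real.exp (max a.re b.re) := by
  have key : ∀ t ∈ Set.uIcc (0:ℝ) 1,
      HasDerivAt (fun t : ℝ => Complex.exp (b + (t:ℂ) * (a - b)) - (t:ℂ) * ((a - b) * Complex.exp b))
        ((a - b) * Complex.exp (b + (t:ℂ) * (a - b)) - (a - b) * Complex.exp b) t := by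
    intro t _
    have h1 : HasDerivAt (fun w : ℂ => Complex.exp (b + w * (a - b)) - w * ((a - b) * Complex.exp b))
        ((a - b) * Complex.exp (b + (t:ℂ) * (a - b)) - (a - b) * Complex.exp b) (t:ℂ) := by
      have h2 := (((hasDerivAt_id ((t:ℂ))).mul_const (a - b)).const_add b).cexp
      have h3 := (hasDerivAt_id ((t:ℂ))).mul_const ((a - b) * Complex.exp b)
      have := h2.fun_sub h3
      simpa [mul_comm, mul_assoc] using this
    exact h1.comp_ofReal
  have hcont : IntervalIntegrable
      (fun t : ℝ => (a - b) * Complex.exp (b + (t:ℂ) * (a - b)) - (a - b) * Complex.exp b)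
      volume 0 1 := by
    apply Continuous.intervalIntegrable; continuity
  have hftc := intervalIntegral.integral_eq_sub_of_hasDerivAt key hcont
  have heq : Complex.exp a - Complex.exp b - (a - b) * Complex.exp b
      = ∫ t in (0:ℝ)..1,
          ((a - b) * Complex.exp (b + (t:ℂ) * (a - b)) - (a - b) * Complex.exp b) := by
    rw [hftc]; push_cast; ring_nf
  rw [heq]
  have := intervalIntegral.norm_integral_le_of_norm_le_const
    (C := ‖a - b‖ ^ 2 * Real.exp (max a.re b.re))
    (f := fun t : ℝ => (a - b) * Complex.exp (b + (t:ℂ) * (a - b)) - (a - b) * Complex.exp b)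
    (a := 0) (b := 1) ?_
  · simpa using this
  · intro t ht
    rw [Set.uIoc_of_le (by norm_num)] at ht
    have h0 : (a - b) * Complex.exp (b + (t:ℂ) * (a - b)) - (a - b) * Complex.exp b
        = (a - b) * (Complex.exp (b + (t:ℂ) * (a - b)) - Complex.exp b) := by ring
    show ‖(a - b) * Complex.exp (b + (t:ℂ) * (a - b)) - (a - b) * Complex.exp b‖ ≤ _
    rw [h0, norm_mul]
    have h1 : ‖Complex.exp (b + (t:ℂ) * (a - b)) - Complex.exp b‖
        ≤ ‖(b + (t:ℂ) * (a - b)) - b‖ * Real.exp (max (b + (t:ℂ) * (a - b)).re b.re) :=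
      norm_exp_sub_exp_le _ _
    have h2 : ‖(b + (t:ℂ) * (a - b)) - b‖ = t * ‖a - b‖ := by
      have h2' : (b + (t:ℂ) * (a - b)) - b = (t:ℂ) * (a - b) := by ring
      rw [h2', norm_mul, Complex.norm_real, Real.norm_eq_abs, abs_of_pos ht.1]
    have hre : (b + (t:ℂ) * (a - b)).re = (1 - t) * b.re + t * a.re := by
      simp [Complex.add_re, Complex.mul_re]; ring
    have h3 : max (b + (t:ℂ) * (a - b)).re b.re ≤ max a.re b.re := by
      rw [hre]
      apply max_le _ (le_max_right _ _)
      have h2' : a.re ≤ max a.re b.re := le_max_left _ _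
      have h3' : b.re ≤ max a.re b.re := le_max_right _ _
      nlinarith [ht.1.le, ht.2]
    calc ‖a - b‖ * ‖Complex.exp (b + (t:ℂ) * (a - b)) - Complex.exp b‖
        ≤ ‖a - b‖ * (t * ‖a - b‖ * Real.exp (max a.re b.re)) := by
          apply mul_le_mul_of_nonneg_left _ (norm_nonneg _)
          refine h1.trans ?_
          rw [h2]
          exact mul_le_mul_of_nonneg_left (Real.exp_le_exp.2 h3)
            (mul_nonneg ht.1.le (norm_nonneg _))
      _ = t * (‖a - b‖ ^ 2 * Real.exp (max a.re b.re)) := by ring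
      _ ≤ 1 * (‖a - b‖ ^ 2 * Real.exp (max a.re b.re)) :=
          mul_le_mul_of_nonneg_right ht.2 (by positivity)
      _ = ‖a - b‖ ^ 2 * Real.exp (max a.re b.re) := one_mul _

lemma eq_on_halfplane {f g : ℂ → ℂ} {d : ℂ → ℂ}
    (hf : ∀ w : ℂ, 0 < w.re → HasDerivAt f (d w) w)
    (hg : ∀ w : ℂ, 0 < w.re → HasDerivAt g (d w) w)
    {w₀ : ℂ} (hw₀ : 0 < w₀.re) (h0 : f w₀ = g w₀)
    {w : ℂ} (hw : 0 < w.re) : f w = g w := by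
  have hconv : Convex ℝ {z : ℂ | 0 < z.re} := convex_halfSpace_re_gt 0
  have key : ‖(f w - g w) - (f w₀ - g w₀)‖ ≤ 0 * ‖w - w₀‖ := by
    have := hconv.norm_image_sub_le_of_norm_hasFDerivWithin_le
      (f := fun z => f z - g z) (C := 0)
      (f' := fun _ : ℂ => ContinuousLinearMap.smulRight (1 : ℂ →L[ℂ] ℂ) (0 : ℂ))
      (fun x hx => by
        have h1 : HasDerivAt (fun z => f z - g z) 0 x := by
          simpa using (hf x hx).fun_sub (hg x hx)
        exact h1.hasFDerivAt.hasFDerivWithinAt)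
      (fun x _ => by simp) hw₀ hw
    simpa using this
  rw [zero_mul] at key
  have h2 := norm_le_zero_iff.mp key
  rw [h0, sub_self] at h2
  have h3 := sub_eq_zero.mp h2
  exact sub_eq_zero.mp h3

noncomputable def Fint (ν : ℝ) (w : ℂ) : ℂ :=
  ∫ y in Ioi (0:ℝ), (Complex.exp (-(ν:ℂ) * y) - Complex.exp (-w * y)) / y

noncomputable def Gint (ν : ℝ) (w : ℂ) : ℂ :=
  ∫ y in Ioi (0:ℝ),
    (Complex.exp (-w * y) - Complex.exp (-(ν:ℂ) * y) + (w - ν) * y * Complex.exp (-(ν:ℂ) * y)) / y ^ 2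

lemma norm_cexp_neg_mul (w : ℂ) (y : ℝ) : ‖Complex.exp (-w * y)‖ = Real.exp (-w.re * y) := by
  rw [Complex.norm_exp]
  congr 1
  simp [Complex.mul_re]

lemma integrableOn_of_bound {f : ℝ → ℂ} (hf : ContinuousOn f (Ioi 0)) (K : ℝ) {c : ℝ}
    (hc : 0 < c) (hb : ∀ y ∈ Ioi (0:ℝ), ‖f y‖ ≤ K * Real.exp (-c * y)) :
    IntegrableOn f (Ioi (0:ℝ)) := by
  apply Integrable.mono' ((exp_neg_integrableOn_Ioi 0 hc).const_mul K)
    (hf.aestronglyMeasurable measurableSet_Ioi)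
  rw [ae_restrict_iff' measurableSet_Ioi]
  exact Filter.Eventually.of_forall hb

lemma ball_re {w₀ w : ℂ} (hw₀ : 0 < w₀.re) (h : w ∈ Metric.ball w₀ (w₀.re / 2)) :
    w₀.re / 2 ≤ w.re := by
  have h1 : dist w w₀ < w₀.re / 2 := Metric.mem_ball.mp h
  rw [Complex.dist_eq] at h1
  have h2 : |(w - w₀).re| ≤ ‖w - w₀‖ := Complex.abs_re_le_norm _
  rw [Complex.sub_re] at h2
  have := abs_lt.mp (lt_of_le_of_lt h2 h1)
  linarith [this.1]

/-- bound for the Frullani integrand -/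
lemma bound1 {ν : ℝ} (hν : 0 < ν) {w : ℂ} (hw : 0 < w.re) {y : ℝ} (hy : 0 < y) :
    ‖(Complex.exp (-(ν:ℂ) * y) - Complex.exp (-w * y)) / y‖
      ≤ ‖w - ν‖ * Real.exp (-(min ν w.re) * y) := by
  have key := norm_exp_sub_exp_le (-(ν:ℂ) * y) (-w * y)
  have h1 : (-(ν:ℂ) * y) - (-w * y) = (w - ν) * y := by ring
  have h2 : ‖((w - ν) * y : ℂ)‖ = ‖w - (ν:ℂ)‖ * y := by
    rw [norm_mul, Complex.norm_real, Real.norm_eq_abs, abs_of_pos hy]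
  have h3 : max ((-(ν:ℂ) * y).re) ((-w * y).re) = -(min ν w.re) * y := by
    have e1 : ((-(ν:ℂ) * y)).re = -ν * y := by simp [Complex.mul_re]
    have e2 : ((-w * y)).re = -w.re * y := by simp [Complex.mul_re]
    rw [e1, e2]
    rcases le_total ν w.re with h | h
    · rw [min_eq_left h, max_eq_left (by nlinarith)]
    · rw [min_eq_right h, max_eq_right (by nlinarith)]
  rw [h1, h2, h3] at key
  rw [norm_div, Complex.norm_real, Real.norm_eq_abs, abs_of_pos hy, div_le_iff₀ hy]
  calc ‖Complex.exp (-(ν:ℂ) * y) - Complex.exp (-w * y)‖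
      ≤ ‖w - (ν:ℂ)‖ * y * Real.exp (-(min ν w.re) * y) := key
    _ = ‖w - (ν:ℂ)‖ * Real.exp (-(min ν w.re) * y) * y := by ring

/-- bound for the second-order integrand -/
lemma bound2 {ν : ℝ} (hν : 0 < ν) {w : ℂ} (hw : 0 < w.re) {y : ℝ} (hy : 0 < y) :
    ‖(Complex.exp (-w * y) - Complex.exp (-(ν:ℂ) * y) + (w - ν) * y * Complex.exp (-(ν:ℂ) * y)) / y ^ 2‖
      ≤ ‖w - ν‖ ^ 2 * Real.exp (-(min ν w.re) * y) := by
  have key := norm_exp_sub_exp_sub_le (-w * y) (-(ν:ℂ) * y)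
  have h1 : (-w * y) - (-(ν:ℂ) * y) = -((w - ν) * y) := by ring
  have heq : Complex.exp (-w * y) - Complex.exp (-(ν:ℂ) * y) -
      ((-w * y) - (-(ν:ℂ) * y)) * Complex.exp (-(ν:ℂ) * y)
      = Complex.exp (-w * y) - Complex.exp (-(ν:ℂ) * y) + (w - ν) * y * Complex.exp (-(ν:ℂ) * y) := by
    rw [h1]; ring
  have h2 : ‖(-w * y) - (-(ν:ℂ) * y)‖ = ‖w - (ν:ℂ)‖ * y := by
    rw [h1, norm_neg, norm_mul, Complex.norm_real, Real.norm_eq_abs, abs_of_pos hy]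
  have h3 : max ((-w * y).re) ((-(ν:ℂ) * y).re) = -(min ν w.re) * y := by
    have e1 : ((-(ν:ℂ) * y)).re = -ν * y := by simp [Complex.mul_re]
    have e2 : ((-w * y)).re = -w.re * y := by simp [Complex.mul_re]
    rw [e1, e2]
    rcases le_total ν w.re with h | h
    · rw [min_eq_left h, max_eq_right (by nlinarith)]
    · rw [min_eq_right h, max_eq_left (by nlinarith)]
  rw [heq, h2, h3] at key
  have h4 : ‖((y:ℂ)) ^ 2‖ = y ^ 2 := by
    rw [norm_pow, Complex.norm_real, Real.norm_eq_abs, sq_abs]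
  rw [norm_div, h4, div_le_iff₀ (pow_pos hy 2)]
  calc ‖Complex.exp (-w * y) - Complex.exp (-(ν:ℂ) * y) + (w - ν) * y * Complex.exp (-(ν:ℂ) * y)‖
      ≤ (‖w - (ν:ℂ)‖ * y) ^ 2 * Real.exp (-(min ν w.re) * y) := key
    _ = ‖w - (ν:ℂ)‖ ^ 2 * Real.exp (-(min ν w.re) * y) * y ^ 2 := by ring


lemma cont1 (ν : ℝ) (w : ℂ) :
    ContinuousOn (fun y : ℝ => (Complex.exp (-(ν:ℂ) * y) - Complex.exp (-w * y)) / y)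
      (Ioi (0:ℝ)) := by
  apply ContinuousOn.div
  · apply Continuous.continuousOn
    continuity
  · exact Complex.continuous_ofReal.continuousOn
  · intro y hy
    exact_mod_cast ne_of_gt (mem_Ioi.mp hy)

lemma cont2 (ν : ℝ) (w : ℂ) :
    ContinuousOn (fun y : ℝ =>
      (Complex.exp (-w * y) - Complex.exp (-(ν:ℂ) * y) + (w - ν) * y * Complex.exp (-(ν:ℂ) * y)) / y ^ 2)
      (Ioi (0:ℝ)) := by
  apply ContinuousOn.div
  · apply Continuous.continuousOn
    continuity
  · apply Continuous.continuousOn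
    continuity
  · intro y hy
    have : (y:ℂ) ≠ 0 := by exact_mod_cast ne_of_gt (mem_Ioi.mp hy)
    exact pow_ne_zero 2 this

lemma integrable_F_integrand {ν : ℝ} (hν : 0 < ν) {w : ℂ} (hw : 0 < w.re) :
    IntegrableOn (fun y : ℝ => (Complex.exp (-(ν:ℂ) * y) - Complex.exp (-w * y)) / y)
      (Ioi (0:ℝ)) := by
  apply integrableOn_of_bound (cont1 ν w) ‖w - (ν:ℂ)‖ (lt_min hν hw)
  intro y hy
  exact bound1 hν hw (mem_Ioi.mp hy)

lemma integrable_G_integrand {ν : ℝ} (hν : 0 < ν) {w : ℂ} (hw : 0 < w.re) :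
    IntegrableOn (fun y : ℝ =>
      (Complex.exp (-w * y) - Complex.exp (-(ν:ℂ) * y) + (w - ν) * y * Complex.exp (-(ν:ℂ) * y)) / y ^ 2)
      (Ioi (0:ℝ)) := by
  apply integrableOn_of_bound (cont2 ν w) (‖w - (ν:ℂ)‖ ^ 2) (lt_min hν hw)
  intro y hy
  exact bound2 hν hw (mem_Ioi.mp hy)

lemma integral_cexp {w : ℂ} (hw : 0 < w.re) :
    ∫ y in Ioi (0:ℝ), Complex.exp (-w * y) = w⁻¹ := by
  have hw0 : w ≠ 0 := by
    intro h; rw [h] at hw; simp at hw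
  have hderiv : ∀ x ∈ Ioi (0:ℝ),
      HasDerivAt (fun y : ℝ => -w⁻¹ * Complex.exp (-w * y)) (Complex.exp (-w * x)) x := by
    intro x _
    have h1 : HasDerivAt (fun v : ℂ => -w⁻¹ * Complex.exp (-w * v))
        (Complex.exp (-w * x)) (x:ℂ) := by
      have h2 := (((hasDerivAt_id ((x:ℂ))).const_mul (-w)).cexp).const_mul (-w⁻¹)
      refine h2.congr_deriv ?_
      simp only [id_eq]
      field_simp
    exact h1.comp_ofReal
  have hint : IntegrableOn (fun y : ℝ => Complex.exp (-w * y)) (Ioi (0:ℝ)) := by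
    apply integrableOn_of_bound (by apply Continuous.continuousOn; continuity) 1 hw
    intro y _
    rw [norm_cexp_neg_mul, one_mul]
  have htend : Filter.Tendsto (fun y : ℝ => -w⁻¹ * Complex.exp (-w * y)) Filter.atTop (nhds 0) := by
    rw [tendsto_zero_iff_norm_tendsto_zero]
    have : (fun y : ℝ => ‖-w⁻¹ * Complex.exp (-w * y)‖)
        = fun y : ℝ => ‖w⁻¹‖ * Real.exp (-(w.re * y)) := by
      funext y
      rw [norm_mul, norm_neg, norm_cexp_neg_mul, neg_mul]
    rw [this]
    rw [show (0:ℝ) = ‖w⁻¹‖ * 0 by ring]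
    apply Filter.Tendsto.const_mul
    apply Real.tendsto_exp_neg_atTop_nhds_zero.comp
    exact Filter.Tendsto.const_mul_atTop hw Filter.tendsto_id
  have hcont : ContinuousWithinAt (fun y : ℝ => -w⁻¹ * Complex.exp (-w * y)) (Ici (0:ℝ)) 0 := by
    apply Continuous.continuousWithinAt
    continuity
  have := integral_Ioi_of_hasDerivAt_of_tendsto hcont hderiv hint htend
  rw [this]
  simp [hw0]

lemma F_hasDeriv {ν : ℝ} (hν : 0 < ν) {w₀ : ℂ} (hw₀ : 0 < w₀.re) :
    HasDerivAt (Fint ν) w₀⁻¹ w₀ := by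
  have hε : (0:ℝ) < w₀.re / 2 := by linarith
  have key := hasDerivAt_integral_of_dominated_loc_of_deriv_le (μ := volume.restrict (Ioi (0:ℝ)))
    (F := fun w (y : ℝ) => (Complex.exp (-(ν:ℂ) * y) - Complex.exp (-w * y)) / y)
    (F' := fun w (y : ℝ) => Complex.exp (-w * y))
    (x₀ := w₀) (s := Metric.ball w₀ (w₀.re / 2))
    (bound := fun y : ℝ => Real.exp (-(w₀.re / 2) * y))
    (Metric.ball_mem_nhds w₀ hε)
    (Filter.Eventually.of_forall fun w =>
      (cont1 ν w).aestronglyMeasurable measurableSet_Ioi)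
    (integrable_F_integrand hν hw₀)
    ((Continuous.continuousOn (by continuity)).aestronglyMeasurable
      (measurableSet_Ioi) : AEStronglyMeasurable (fun y : ℝ => Complex.exp (-w₀ * y)) _)
    ?_ ?_ ?_
  · rcases key with ⟨-, hd⟩
    rwa [integral_cexp hw₀] at hd
  · rw [ae_restrict_iff' measurableSet_Ioi]
    apply Filter.Eventually.of_forall
    intro y hy w hwball
    have hy0 := mem_Ioi.mp hy
    rw [norm_cexp_neg_mul]
    apply Real.exp_le_exp.2
    have := ball_re hw₀ hwball
    nlinarith
  · exact (exp_neg_integrableOn_Ioi 0 hε)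
  · rw [ae_restrict_iff' measurableSet_Ioi]
    apply Filter.Eventually.of_forall
    intro y hy w _
    have hy0 : (y:ℂ) ≠ 0 := by exact_mod_cast ne_of_gt (mem_Ioi.mp hy)
    have h1 : HasDerivAt (fun w : ℂ => (Complex.exp (-(ν:ℂ) * y) - Complex.exp (-w * y)) / y)
        (Complex.exp (-w * y)) w := by
      have h2 := ((((hasDerivAt_id w).neg.mul_const ((y:ℂ))).cexp).const_sub
        (Complex.exp (-(ν:ℂ) * y))).div_const ((y:ℂ))
      refine h2.congr_deriv ?_
      simp only [Pi.neg_apply, id_eq]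
      field_simp
    exact h1
  
lemma Fint_self (ν : ℝ) : Fint ν ((ν:ℂ)) = 0 := by
  unfold Fint
  simp

lemma mem_slitPlane_of_re_pos {w : ℂ} (hw : 0 < w.re) : w ∈ Complex.slitPlane :=
  Or.inl hw

lemma F_eq {ν : ℝ} (hν : 0 < ν) {w : ℂ} (hw : 0 < w.re) :
    Fint ν w = Complex.log w - Complex.log ν := by
  have hre : (0:ℝ) < ((ν:ℂ)).re := by simpa using hν
  apply eq_on_halfplane (d := fun w => w⁻¹)
    (fun w hw => F_hasDeriv hν hw)
    (fun w hw => (Complex.hasDerivAt_log (mem_slitPlane_of_re_pos hw)).sub_const _)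
    hre _ hw
  rw [Fint_self, sub_self]


lemma G_hasDeriv {ν : ℝ} (hν : 0 < ν) {w₀ : ℂ} (hw₀ : 0 < w₀.re) :
    HasDerivAt (Gint ν) (Fint ν w₀) w₀ := by
  have hε : (0:ℝ) < w₀.re / 2 := by linarith
  have hm : (0:ℝ) < min ν (w₀.re / 2) := lt_min hν hε
  set K : ℝ := ‖w₀ - (ν:ℂ)‖ + w₀.re / 2 with hK
  have key := hasDerivAt_integral_of_dominated_loc_of_deriv_le (μ := volume.restrict (Ioi (0:ℝ)))
    (F := fun w (y : ℝ) =>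
      (Complex.exp (-w * y) - Complex.exp (-(ν:ℂ) * y) + (w - ν) * y * Complex.exp (-(ν:ℂ) * y)) / y ^ 2)
    (F' := fun w (y : ℝ) => (Complex.exp (-(ν:ℂ) * y) - Complex.exp (-w * y)) / y)
    (x₀ := w₀) (s := Metric.ball w₀ (w₀.re / 2))
    (bound := fun y : ℝ => K * Real.exp (-(min ν (w₀.re / 2)) * y))
    (Metric.ball_mem_nhds w₀ hε)
    (Filter.Eventually.of_forall fun w =>
      (cont2 ν w).aestronglyMeasurable measurableSet_Ioi)
    (integrable_G_integrand hν hw₀)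
    ((cont1 ν w₀).aestronglyMeasurable measurableSet_Ioi)
    ?_ ?_ ?_
  · exact key.2
  · rw [ae_restrict_iff' measurableSet_Ioi]
    apply Filter.Eventually.of_forall
    intro y hy w hwball
    have hy0 := mem_Ioi.mp hy
    have hwre : 0 < w.re := lt_of_lt_of_le hε (ball_re hw₀ hwball)
    refine (bound1 hν hwre hy0).trans ?_
    have hKb : ‖w - (ν:ℂ)‖ ≤ K := by
      have h1 : ‖w - (ν:ℂ)‖ ≤ ‖w - w₀‖ + ‖w₀ - (ν:ℂ)‖ := by
        calc ‖w - (ν:ℂ)‖ = ‖(w - w₀) + (w₀ - (ν:ℂ))‖ := by ring_nf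
          _ ≤ ‖w - w₀‖ + ‖w₀ - (ν:ℂ)‖ := norm_add_le _ _
      have h2 : ‖w - w₀‖ < w₀.re / 2 := by
        rw [← dist_eq_norm]; exact Metric.mem_ball.mp hwball
      rw [hK]; linarith
    have hexp : Real.exp (-(min ν w.re) * y) ≤ Real.exp (-(min ν (w₀.re / 2)) * y) := by
      apply Real.exp_le_exp.2
      have : min ν (w₀.re / 2) ≤ min ν w.re :=
        le_min (min_le_left _ _) (le_trans (min_le_right _ _) (ball_re hw₀ hwball))
      nlinarith
    exact mul_le_mul hKb hexp (Real.exp_pos _).le (by rw [hK]; positivity)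
  · exact (exp_neg_integrableOn_Ioi 0 hm).const_mul K
  · rw [ae_restrict_iff' measurableSet_Ioi]
    apply Filter.Eventually.of_forall
    intro y hy w _
    have hy0 : (y:ℂ) ≠ 0 := by exact_mod_cast ne_of_gt (mem_Ioi.mp hy)
    have h2 := (((((hasDerivAt_id w).neg.mul_const ((y:ℂ))).cexp).sub_const
        (Complex.exp (-(ν:ℂ) * y))).add
        (((hasDerivAt_id w).sub_const ((ν:ℂ))).mul_const ((y:ℂ) * Complex.exp (-(ν:ℂ) * y)))).div_const
        (((y:ℂ)) ^ 2)
    have h3 : HasDerivAt (fun w : ℂ =>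
        (Complex.exp (-w * y) - Complex.exp (-(ν:ℂ) * y) + (w - ν) * y * Complex.exp (-(ν:ℂ) * y)) / y ^ 2)
        ((Complex.exp (-(ν:ℂ) * y) - Complex.exp (-w * y)) / y) w := by
      refine (h2.congr_of_eventuallyEq (Filter.Eventually.of_forall fun v => ?_)).congr_deriv ?_
      · simp only [Pi.add_apply, Pi.neg_apply, id_eq]
        ring
      · simp only [Pi.neg_apply, id_eq]
        field_simp
        ring
    exact h3

lemma Gint_self (ν : ℝ) : Gint ν ((ν:ℂ)) = 0 := by
  unfold Gint
  simp

lemma G_eq {ν : ℝ} (hν : 0 < ν) {w : ℂ} (hw : 0 < w.re) :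
    Gint ν w = w * (Complex.log w - Complex.log ν) - w + ν := by
  have hre : (0:ℝ) < ((ν:ℂ)).re := by simpa using hν
  apply eq_on_halfplane (d := fun w => Complex.log w - Complex.log ν)
    (fun w hw => by
      have := G_hasDeriv hν hw
      rwa [F_eq hν hw] at this)
    (fun w hw => by
      have hw0 : w ≠ 0 := by
        intro h; rw [h] at hw; simp at hw
      have h1 := ((hasDerivAt_id w).mul
        ((Complex.hasDerivAt_log (mem_slitPlane_of_re_pos hw)).sub_const (Complex.log ν)))
      have h2 := (h1.sub (hasDerivAt_id w)).add_const ((ν:ℂ) : ℂ)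
      refine h2.congr_deriv ?_
      simp only [id_eq]
      field_simp
      ring)
    hre _ hw
  rw [Gint_self, sub_self, mul_zero, zero_sub, neg_add_cancel]

end Stmt9Aux

end Stmt9AuxSection

open Stmt9Aux

/-- The `α_R = 1` special case of the symbol identity for the right tail of the
GTSP/CGMY/KoBoL model: for `ν > 1` and `Re z < ν`,
`∫_0^∞ [e^{yz} - 1 - (e^y - 1) z] e^{-ν y} y^{-2} dy
  = (ν - z) log (ν - z) - ν log ν + z (log (ν - 1) - ν log ((ν-1)/ν))`,
where `log` is the principal complex logarithm. -/
theorem stmt_9 (ν : ℝ) (hν : 1 < ν) (z : ℂ) (hz : z.re < ν) :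
    ∫ y in Set.Ioi (0 : ℝ),
        (Complex.exp ((y : ℂ) * z) - 1 - (Complex.exp (y : ℂ) - 1) * z) *
          ((Real.exp (-ν * y) * (y ^ 2)⁻¹ : ℝ) : ℂ)
      = ((ν : ℂ) - z) * Complex.log ((ν : ℂ) - z) - (ν : ℂ) * Complex.log (ν : ℂ) +
          z * (Complex.log ((ν : ℂ) - 1) -
            (ν : ℂ) * Complex.log (((ν : ℂ) - 1) / (ν : ℂ))) := by
  have hν0 : (0:ℝ) < ν := by linarith
  have hre1 : 0 < ((ν:ℂ) - z).re := by
    have : ((ν:ℂ) - z).re = ν - z.re := by simp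
    rw [this]; linarith
  have hre2 : 0 < ((ν:ℂ) - 1).re := by
    have : ((ν:ℂ) - 1).re = ν - 1 := by simp
    rw [this]; linarith
  have key : (∫ y in Set.Ioi (0:ℝ),
        (Complex.exp ((y:ℂ)*z) - 1 - (Complex.exp (y:ℂ) - 1)*z) *
          ((Real.exp (-ν*y) * (y^2)⁻¹ : ℝ) : ℂ))
      = Gint ν ((ν:ℂ) - z) - z * Gint ν ((ν:ℂ) - 1) := by
    unfold Gint
    rw [← MeasureTheory.integral_const_mul,
      ← MeasureTheory.integral_sub (integrable_G_integrand hν0 hre1)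
        ((integrable_G_integrand hν0 hre2).const_mul z)]
    apply MeasureTheory.setIntegral_congr_fun measurableSet_Ioi
    intro y hy
    have hy0 : (0:ℝ) < y := hy
    have hyc : (y:ℂ) ≠ 0 := by exact_mod_cast ne_of_gt hy0
    simp only
    have e1 : Complex.exp (-((ν:ℂ) - z) * y) = Complex.exp ((y:ℂ)*z) * Complex.exp (-(ν:ℂ)*y) := by
      rw [← Complex.exp_add]; congr 1; ring
    have e2 : Complex.exp (-((ν:ℂ) - 1) * y) = Complex.exp ((y:ℂ)) * Complex.exp (-(ν:ℂ)*y) := by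
      rw [← Complex.exp_add]; congr 1; ring
    rw [e1, e2]
    push_cast
    field_simp
    ring
  rw [key, G_eq hν0 hre1, G_eq hν0 hre2]
  have hlog : Complex.log (((ν:ℂ) - 1)/ν) = Complex.log ((ν:ℂ) - 1) - Complex.log (ν:ℂ) := by
    have h1 : ((ν:ℂ) - 1) = ((ν - 1 : ℝ) : ℂ) := by push_cast; ring
    have hd : (0:ℝ) ≤ (ν - 1)/ν := by positivity
    rw [h1, ← Complex.ofReal_div, ← Complex.ofReal_log hd,
      Real.log_div (by linarith) (by linarith), Complex.ofReal_sub,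
      Complex.ofReal_log (by linarith : (0:ℝ) ≤ ν - 1), Complex.ofReal_log hν0.le]
  rw [hlog]
  ring
end

section
/- Let n ≥ 1, let S be the n×n shift matrix (S has entry 1 in positions (i, i+1) and 0 elsewhere), and let ε > 0, a > 0, b > 0. Then the upper-triangular Toeplitz matrix B₁ = ε·I + a·S − b·S² is eventually nonnegative: there exists a positive integer k₀ such that for every k ≥ k₀ the matrix B₁^k is entrywise nonnegative. (This is the key step in the proof of Lemma 2: with a = 2, b = 1 and small ε it shows that A^F_2 + bI is eventually nonnegative for b = 3/(2h) + ε.) -/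
open Matrix
open Polynomial

noncomputable def Pq (a b : ℝ) : ℝ[X] := 1 + C a * X - C b * X^2

lemma coeff_mul_Pq2 (a b : ℝ) (Q : ℝ[X]) (d : ℕ) :
    (Q * Pq a b).coeff (d+2) = Q.coeff (d+2) + a * Q.coeff (d+1) - b * Q.coeff d := by
  rw [Pq, show Q * (1 + C a * X - C b * X^2) = Q + (Q * X) * C a - ((Q * X) * X) * C b by ring,
    coeff_sub, coeff_add, coeff_mul_C, coeff_mul_C, coeff_mul_X, coeff_mul_X, coeff_mul_X]
  ring

lemma coeff_mul_Pq0 (a b : ℝ) (Q : ℝ[X]) :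
    (Q * Pq a b).coeff 0 = Q.coeff 0 := by
  simp [Pq, mul_add, mul_sub]

lemma coeff_mul_Pq1 (a b : ℝ) (Q : ℝ[X]) :
    (Q * Pq a b).coeff 1 = Q.coeff 1 + a * Q.coeff 0 := by
  rw [Pq, show Q * (1 + C a * X - C b * X^2) = Q + (Q * X) * C a - ((Q * X) * X) * C b by ring,
    coeff_sub, coeff_add, coeff_mul_C, coeff_mul_C, show (1:ℕ) = 0 + 1 from rfl,
    coeff_mul_X, coeff_mul_X]
  simp [mul_comm]

noncomputable def cc (a b : ℝ) (d k : ℕ) : ℝ := ((Pq a b)^k).coeff d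

lemma cc_zero (a b : ℝ) (d : ℕ) : cc a b d 0 = if d = 0 then 1 else 0 := by
  simp [cc, Polynomial.coeff_one]

lemma cc_rec2 (a b : ℝ) (d k : ℕ) :
    cc a b (d+2) (k+1) = cc a b (d+2) k + a * cc a b (d+1) k - b * cc a b d k := by
  rw [cc, pow_succ, coeff_mul_Pq2]; rfl

lemma cc_rec0 (a b : ℝ) (k : ℕ) : cc a b 0 (k+1) = cc a b 0 k := by
  rw [cc, pow_succ, coeff_mul_Pq0]; rfl

lemma cc_rec1 (a b : ℝ) (k : ℕ) : cc a b 1 (k+1) = cc a b 1 k + a * cc a b 0 k := by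
  rw [cc, pow_succ, coeff_mul_Pq1]; rfl

lemma cc_d0 (a b : ℝ) (k : ℕ) : cc a b 0 k = 1 := by
  induction k with
  | zero => simp [cc_zero]
  | succ k ih => rw [cc_rec0, ih]

lemma cc_d1 (a b : ℝ) (k : ℕ) : cc a b 1 k = a * k := by
  induction k with
  | zero => simp [cc_zero]
  | succ k ih => rw [cc_rec1, ih, cc_d0]; push_cast; ring

lemma step_pow (k d : ℕ) : ((k:ℝ)+1+1)^(d+1) ≥ ((k:ℝ)+1)^(d+1) + ((k:ℝ)+1)^d := by
  calc ((k:ℝ)+1)^(d+1) + ((k:ℝ)+1)^d = (((k:ℝ)+1)+1) * ((k:ℝ)+1)^d := by ring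
    _ ≤ (((k:ℝ)+1)+1) * (((k:ℝ)+1)+1)^d := by
        apply mul_le_mul_of_nonneg_left _ (by positivity)
        apply pow_le_pow_left₀ (by positivity); linarith
    _ = ((k:ℝ)+1+1)^(d+1) := by ring

lemma cc_upper (a b : ℝ) (ha : 0 < a) (hb : 0 < b) (d k : ℕ) :
    |cc a b d k| ≤ (max 1 (a+b))^d * ((k:ℝ)+1)^d := by
  set K := max 1 (a+b) with hK
  have hK1 : (1:ℝ) ≤ K := le_max_left _ _
  have hKab : a + b ≤ K := le_max_right _ _
  have hK0 : (0:ℝ) < K := lt_of_lt_of_le one_pos hK1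
  induction k generalizing d with
  | zero =>
    rw [cc_zero]
    have : (0:ℝ)+1 = 1 := by ring
    rcases eq_or_ne d 0 with h | h
    · simp [h]
    · simp only [h, if_false, abs_zero]; positivity
  | succ k ih =>
    match d with
    | 0 => rw [cc_d0]; simp
    | 1 =>
      rw [cc_d1]; rw [abs_of_nonneg (by positivity)]
      have : (a:ℝ) * (k+1) ≤ K * ((k+1)+1) := by nlinarith
      push_cast; push_cast at this; nlinarith
    | (e+2) =>
      rw [cc_rec2]
      have h1 := ih (e+2)
      have h2 := ih (e+1)
      have h3 := ih e
      have hkk : (0:ℝ) ≤ (k:ℝ)+1 := by positivity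
      have hb3 : b * |cc a b e k| ≤ b * (K^(e+1) * ((k:ℝ)+1)^(e+1)) := by
        have : K^e * ((k:ℝ)+1)^e ≤ K^(e+1) * ((k:ℝ)+1)^(e+1) := by
          have : K^e * ((k:ℝ)+1)^e * 1 ≤ (K^e * ((k:ℝ)+1)^e) * (K * ((k:ℝ)+1)) := by
            apply mul_le_mul_of_nonneg_left _ (by positivity)
            nlinarith
          calc K^e * ((k:ℝ)+1)^e = K^e * ((k:ℝ)+1)^e * 1 := by ring
            _ ≤ (K^e * ((k:ℝ)+1)^e) * (K * ((k:ℝ)+1)) := this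
            _ = K^(e+1) * ((k:ℝ)+1)^(e+1) := by ring
        nlinarith [abs_nonneg (cc a b e k)]
      have key : |cc a b (e+2) k + a * cc a b (e+1) k - b * cc a b e k|
          ≤ K^(e+2) * ((k:ℝ)+1)^(e+2) + (a+b) * (K^(e+1) * ((k:ℝ)+1)^(e+1)) := by
        calc |cc a b (e+2) k + a * cc a b (e+1) k - b * cc a b e k|
            ≤ |cc a b (e+2) k| + a * |cc a b (e+1) k| + b * |cc a b e k| := by
              have := abs_add_le (cc a b (e+2) k + a * cc a b (e+1) k) (-(b * cc a b e k))
              have h4 := abs_add_le (cc a b (e+2) k) (a * cc a b (e+1) k)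
              rw [abs_mul, abs_of_pos ha] at h4
              rw [abs_neg, abs_mul, abs_of_pos hb] at this
              calc |cc a b (e+2) k + a * cc a b (e+1) k - b * cc a b e k|
                  = |cc a b (e+2) k + a * cc a b (e+1) k + -(b * cc a b e k)| := by ring_nf
                _ ≤ _ := this
                _ ≤ _ := by linarith
          _ ≤ _ := by nlinarith [abs_nonneg (cc a b (e+1) k)]
      have hstep := step_pow k (e+1)
      have hmono : (a+b) * (K^(e+1) * ((k:ℝ)+1)^(e+1)) ≤ K^(e+2) * ((k:ℝ)+1)^(e+1) := by
        have h5 : K^(e+1) * (a+b) ≤ K^(e+1) * K := by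
          apply mul_le_mul_of_nonneg_left hKab (by positivity)
        have h6 := mul_le_mul_of_nonneg_right h5 (pow_nonneg hkk (e+1))
        calc (a+b) * (K^(e+1) * ((k:ℝ)+1)^(e+1)) = (K^(e+1)*(a+b)) * ((k:ℝ)+1)^(e+1) := by ring
          _ ≤ (K^(e+1)*K) * ((k:ℝ)+1)^(e+1) := h6
          _ = K^(e+2) * ((k:ℝ)+1)^(e+1) := by ring
      have : K^(e+2) * ((k:ℝ)+1)^(e+2) + K^(e+2) * ((k:ℝ)+1)^(e+1)
          ≤ K^(e+2) * ((k:ℝ)+1+1)^(e+2) := by nlinarith [pow_pos hK0 (e+2)]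
      push_cast
      push_cast at key
      linarith

lemma cc_lower (a b : ℝ) (ha : 0 < a) (hb : 0 < b) (d : ℕ) :
    ∃ D : ℝ, 0 ≤ D ∧ ∀ k : ℕ,
      a^d * (k.choose d : ℝ) - D * ((k:ℝ)+1)^(d-1) ≤ cc a b d k := by
  induction d with
  | zero => exact ⟨0, le_refl 0, fun k => by simp [cc_d0]⟩
  | succ e ih =>
    match e, ih with
    | 0, _ => exact ⟨0, le_refl 0, fun k => by rw [cc_d1]; simp⟩
    | (f+1), ih =>
      obtain ⟨D1, hD1, hIH⟩ := ih
      simp only [Nat.add_sub_cancel] at hIH ⊢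
      set K := max 1 (a+b) with hK
      have hK0 : (0:ℝ) < K := lt_of_lt_of_le one_pos (le_max_left _ _)
      refine ⟨a*D1 + b*K^f, by positivity, ?_⟩
      intro k
      induction k with
      | zero =>
        rw [cc_zero]
        simp [Nat.choose_eq_zero_of_lt]
        nlinarith [mul_pos hb (pow_pos hK0 f), mul_nonneg ha.le hD1]
      | succ k ihk =>
        rw [cc_rec2]
        have h2 := hIH k
        have hup := cc_upper a b ha hb f k
        rw [← hK] at hup
        have h3 : -(b * cc a b f k) ≥ -(b * (K^f * ((k:ℝ)+1)^f)) := by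
          have habs : cc a b f k ≤ K^f * ((k:ℝ)+1)^f := le_trans (le_abs_self _) hup
          nlinarith
        have hch : ((k+1).choose (f+1+1) : ℝ) = (k.choose (f+1) : ℝ) + (k.choose (f+1+1) : ℝ) := by
          have : (k+1).choose (f+1+1) = k.choose (f+1) + k.choose (f+1+1) := Nat.choose_succ_succ _ _
          exact_mod_cast this
        have hstep := step_pow k f
        have hDnn : (0:ℝ) ≤ a*D1 + b*K^f := by positivity
        have h4 : a^(f+1+1) * ((k.choose (f+1)):ℝ) - a * (D1 * ((k:ℝ)+1)^f) ≤ a * cc a b (f+1) k := by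
          have := mul_le_mul_of_nonneg_left h2 ha.le
          calc a^(f+1+1) * ((k.choose (f+1)):ℝ) - a * (D1 * ((k:ℝ)+1)^f)
              = a * (a^(f+1) * ((k.choose (f+1)):ℝ) - D1 * ((k:ℝ)+1)^f) := by ring
            _ ≤ _ := this
        have hmon : (a*D1 + b*K^f) * (((k:ℝ)+1)^(f+1) + ((k:ℝ)+1)^f)
            ≤ (a*D1 + b*K^f) * ((((k:ℝ)+1)+1)^(f+1)) := mul_le_mul_of_nonneg_left hstep hDnn
        rw [hch]
        push_cast at ihk ⊢
        nlinarith [hmon, h4, h3, ihk]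

lemma cc_ev (a b : ℝ) (ha : 0 < a) (hb : 0 < b) (d : ℕ) :
    ∃ m : ℕ, ∀ k ≥ m, 0 ≤ cc a b d k := by
  match d with
  | 0 => exact ⟨0, fun k _ => by rw [cc_d0]; norm_num⟩
  | (e+1) =>
    obtain ⟨D, hD, hL⟩ := cc_lower a b ha hb (e+1)
    simp only [Nat.add_sub_cancel] at hL
    set F : ℝ := (a/2)^(e+1) / (Nat.factorial (e+1)) with hF
    have hfac : (0:ℝ) < (Nat.factorial (e+1) : ℝ) := by exact_mod_cast Nat.factorial_pos _
    have hF0 : 0 < F := by positivity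
    obtain ⟨N, hN⟩ := exists_nat_ge (D / F)
    refine ⟨max (2*e+2) N, fun k hk => ?_⟩
    have hk1 : 2*e+2 ≤ k := le_trans (le_max_left _ _) hk
    have hk2 : (N:ℝ) ≤ k := by exact_mod_cast le_trans (le_max_right _ _) hk
    have hkT : D / F ≤ (k:ℝ) + 1 := by linarith
    have hC : (((k + 1 - (e+1) : ℕ)) ^ (e+1) : ℝ) / (Nat.factorial (e+1)) ≤ (k.choose (e+1) : ℝ) :=
      Nat.pow_le_choose _ _
    have hhalf : ((k:ℝ)+1)/2 ≤ ((k + 1 - (e+1) : ℕ) : ℝ) := by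
      have h' : k + 1 - (e+1) = k - e := by omega
      rw [h', Nat.cast_sub (by omega : e ≤ k)]
      have : (2*e+2 : ℝ) ≤ (k:ℝ) := by exact_mod_cast hk1
      push_cast at this ⊢
      linarith
    have hpow : (((k:ℝ)+1)/2)^(e+1) ≤ (((k + 1 - (e+1) : ℕ) : ℝ))^(e+1) :=
      pow_le_pow_left₀ (by positivity) hhalf _
    have step1 : (((k:ℝ)+1)/2)^(e+1) / (Nat.factorial (e+1) : ℝ) ≤ (k.choose (e+1) : ℝ) := by
      refine le_trans ?_ hC
      gcongr
    have h1 : F * ((k:ℝ)+1)^(e+1) ≤ a^(e+1) * (k.choose (e+1) : ℝ) := by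
      have hm := mul_le_mul_of_nonneg_left step1 (by positivity : (0:ℝ) ≤ a^(e+1))
      calc F * ((k:ℝ)+1)^(e+1)
          = a^(e+1) * ((((k:ℝ)+1)/2)^(e+1) / (Nat.factorial (e+1) : ℝ)) := by
            rw [hF, div_pow, div_pow]; field_simp
        _ ≤ _ := hm
    have h2 : D * ((k:ℝ)+1)^e ≤ F * ((k:ℝ)+1)^(e+1) := by
      have hDF : D ≤ F * ((k:ℝ)+1) := by
        rw [div_le_iff₀ hF0] at hkT
        linarith
      calc D * ((k:ℝ)+1)^e ≤ (F * ((k:ℝ)+1)) * ((k:ℝ)+1)^e :=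
            mul_le_mul_of_nonneg_right hDF (by positivity)
        _ = F * ((k:ℝ)+1)^(e+1) := by ring
    have := hL k
    linarith

lemma shift_pow_entry (n : ℕ) (m : ℕ) (i j : Fin n) :
    (((Matrix.of fun i j : Fin n => if (j : ℕ) = (i : ℕ) + 1 then (1:ℝ) else 0)) ^ m) i j
      = if (j : ℕ) = (i : ℕ) + m then 1 else 0 := by
  induction m generalizing j with
  | zero =>
    simp [Matrix.one_apply, Fin.ext_iff, eq_comm]
  | succ m ih =>
    rw [pow_succ, Matrix.mul_apply]
    simp only [Matrix.of_apply]
    by_cases h : (i : ℕ) + m < n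
    · have : ∀ l : Fin n, (((Matrix.of fun i j : Fin n => if (j : ℕ) = (i : ℕ) + 1 then (1:ℝ) else 0)) ^ m) i l
          * (if (j : ℕ) = (l : ℕ) + 1 then (1:ℝ) else 0)
          = if l = (⟨(i:ℕ)+m, h⟩ : Fin n) then (if (j : ℕ) = (i : ℕ) + m + 1 then (1:ℝ) else 0) else 0 := by
        intro l
        rw [ih]
        by_cases hl : l = (⟨(i:ℕ)+m, h⟩ : Fin n)
        · subst hl; simp
        · have : ¬ ((l : ℕ) = (i : ℕ) + m) := by
            intro hc; exact hl (Fin.ext hc)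
          simp [this, hl]
      rw [Finset.sum_congr rfl (fun l _ => this l), Finset.sum_ite_eq' Finset.univ]
      simp [add_assoc]
    · have hz : ∀ l : Fin n, (((Matrix.of fun i j : Fin n => if (j : ℕ) = (i : ℕ) + 1 then (1:ℝ) else 0)) ^ m) i l
          * (if (j : ℕ) = (l : ℕ) + 1 then (1:ℝ) else 0) = 0 := by
        intro l
        rw [ih]
        have : ¬ ((l : ℕ) = (i : ℕ) + m) := by
          intro hc; exact h (hc ▸ l.isLt)
        simp [this]
      rw [Finset.sum_congr rfl (fun l _ => hz l), Finset.sum_const_zero]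
      have h3 : ¬ ((j : ℕ) = (i : ℕ) + (m + 1)) := by
        have := j.isLt; omega
      simp [h3]

lemma aeval_shift_entry (n : ℕ) (Q : ℝ[X]) (i j : Fin n) :
    (Polynomial.aeval ((Matrix.of fun i j : Fin n => if (j : ℕ) = (i : ℕ) + 1 then (1:ℝ) else 0)) Q) i j
      = if (i : ℕ) ≤ (j : ℕ) then Q.coeff ((j : ℕ) - (i : ℕ)) else 0 := by
  set S := (Matrix.of fun i j : Fin n => if (j : ℕ) = (i : ℕ) + 1 then (1:ℝ) else 0) with hS
  set N := Q.natDegree + 1 with hN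
  rw [Polynomial.aeval_eq_sum_range]
  rw [show (∑ m ∈ Finset.range N, Q.coeff m • S ^ m) i j
      = ∑ m ∈ Finset.range N, Q.coeff m * ((S ^ m) i j) by
    rw [Matrix.sum_apply]; exact Finset.sum_congr rfl fun m _ => rfl]
  have hterm : ∀ m, Q.coeff m * ((S ^ m) i j)
      = if ((j : ℕ) - (i : ℕ)) = m ∧ (i:ℕ) ≤ (j:ℕ) then Q.coeff m else 0 := by
    intro m
    rw [hS, shift_pow_entry]
    by_cases h : (j : ℕ) = (i : ℕ) + m
    · have h2 : ((j : ℕ) - (i : ℕ)) = m ∧ (i:ℕ) ≤ (j:ℕ) := by omega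
      rw [if_pos h, mul_one, if_pos h2]
    · have h2 : ¬ (((j : ℕ) - (i : ℕ)) = m ∧ (i:ℕ) ≤ (j:ℕ)) := by omega
      rw [if_neg h, mul_zero, if_neg h2]
  rw [Finset.sum_congr rfl fun m _ => hterm m]
  by_cases hij : (i:ℕ) ≤ (j:ℕ)
  · simp only [hij, and_true]
    rw [Finset.sum_ite_eq (Finset.range N)]
    by_cases hd : ((j : ℕ) - (i : ℕ)) ∈ Finset.range N
    · simp [hd]
    · simp only [hd, if_false]
      have : Q.natDegree < (j : ℕ) - (i : ℕ) := by
        simp [Finset.mem_range, hN] at hd; omega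
      exact (Polynomial.coeff_eq_zero_of_natDegree_lt this).symm
  · simp [hij]


/-- Key step in the proof of Lemma 2: the upper-triangular Toeplitz matrix
`B₁ = ε•I + a•S - b•S²` (with `S` the shift matrix and `ε, a, b > 0`) is eventually
nonnegative: there is a positive integer `k₀` such that `B₁^k` is entrywise
nonnegative for all `k ≥ k₀`. -/
theorem stmt_12 (n : ℕ) (hn : 1 ≤ n) (ε a b : ℝ) (hε : 0 < ε) (ha : 0 < a)
    (hb : 0 < b) :
    let S : Matrix (Fin n) (Fin n) ℝ :=
      Matrix.of fun i j => if (j : ℕ) = (i : ℕ) + 1 then 1 else 0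
    let B₁ : Matrix (Fin n) (Fin n) ℝ :=
      ε • (1 : Matrix (Fin n) (Fin n) ℝ) + a • S - b • S ^ 2
    ∃ k₀ : ℕ, 0 < k₀ ∧ ∀ k ≥ k₀, ∀ i j, 0 ≤ (B₁ ^ k) i j := by
  intro S B₁
  have ha' : 0 < a / ε := div_pos ha hε
  have hb' : 0 < b / ε := div_pos hb hε
  -- B₁ as the aeval of a polynomial at S
  set P : ℝ[X] := C ε + C a * X - C b * X^2 with hPdef
  have hB : B₁ = Polynomial.aeval S P := by
    rw [hPdef]
    simp only [map_add, map_sub, _root_.map_mul, map_pow, Polynomial.aeval_C, Polynomial.aeval_X,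
      Algebra.algebraMap_eq_smul_one, smul_mul_assoc, one_mul]
    rfl
  -- factor out ε
  have hP : P = C ε * Pq (a/ε) (b/ε) := by
    have h1 : ε * (a/ε) = a := by field_simp
    have h2 : ε * (b/ε) = b := by field_simp
    rw [hPdef, Pq, mul_sub, mul_add, mul_one, ← mul_assoc, ← Polynomial.C_mul, h1,
      ← mul_assoc, ← Polynomial.C_mul, h2]
  have hcoeff : ∀ k d : ℕ, (P ^ k).coeff d = ε ^ k * cc (a/ε) (b/ε) d k := by
    intro k d
    rw [hP, mul_pow, ← map_pow, Polynomial.coeff_C_mul, cc]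
  -- eventual nonnegativity thresholds
  set md : ℕ → ℕ := fun d => (cc_ev (a/ε) (b/ε) ha' hb' d).choose with hmd
  have hmds : ∀ d, ∀ k ≥ md d, 0 ≤ cc (a/ε) (b/ε) d k :=
    fun d => (cc_ev (a/ε) (b/ε) ha' hb' d).choose_spec
  refine ⟨((Finset.range n).sup md) + 1, Nat.succ_pos _, fun k hk i j => ?_⟩
  have hBk : (B₁ ^ k) i j = (Polynomial.aeval S (P ^ k)) i j := by rw [hB, map_pow]
  rw [hBk, aeval_shift_entry, hcoeff]
  by_cases hij : (i : ℕ) ≤ (j : ℕ)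
  · rw [if_pos hij]
    have hd : (j : ℕ) - (i : ℕ) ∈ Finset.range n := by
      simp only [Finset.mem_range]
      have := j.isLt; omega
    have hm : md ((j : ℕ) - (i : ℕ)) ≤ k :=
      le_trans (le_trans (Finset.le_sup hd) (Nat.le_succ _)) hk
    exact mul_nonneg (pow_nonneg hε.le k) (hmds _ k hm)
  · rw [if_neg hij]
end

section
/- Lemma 2: Let n ≥ 1, ν > 0 and h > 0. Let A^F_2 be the n×n matrix with −3/(2h) on the main diagonal, 2/h on the first superdiagonal, −1/(2h) on the second superdiagonal and zeros elsewhere. Then the matrix A = ν·I − A^F_2 is an EM-matrix: there exist a real number s > 0 and an n×n real matrix B such that A = s·I − B, B is eventually nonnegative, and 0 < ρ(B) < s, where ρ(B) denotes the spectral radius of B. -/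
open Matrix Polynomial Finset

/-- The spectral radius of a real square matrix: the supremum of the moduli of its
complex eigenvalues. -/
noncomputable def specRad {n : ℕ} (B : Matrix (Fin n) (Fin n) ℝ) : ℝ :=
  sSup ((fun z : ℂ => ‖z‖) '' spectrum ℂ (B.map Complex.ofReal))


set_option maxHeartbeats 1000000
section Aux

noncomputable def shiftM (n : ℕ) : Matrix (Fin n) (Fin n) ℝ :=
  Matrix.of fun i j => if (j : ℕ) = (i : ℕ) + 1 then 1 else 0

lemma shiftM_pow_apply (n m : ℕ) (i j : Fin n) :
    ((shiftM n) ^ m) i j = if (j : ℕ) = (i : ℕ) + m then 1 else 0 := by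
  induction m generalizing i j with
  | zero => simp [pow_zero, one_apply, Fin.ext_iff, eq_comm]
  | succ m ih =>
    rw [pow_succ, mul_apply]
    by_cases hc : (j : ℕ) = (i : ℕ) + (m + 1)
    · have hlt : (i : ℕ) + m < n := by omega
      rw [if_pos hc]
      rw [Finset.sum_eq_single (⟨(i : ℕ) + m, hlt⟩ : Fin n)]
      · rw [ih]; simp [shiftM, hc, Nat.add_assoc]
      · intro l _ hl
        rw [ih, shiftM]
        by_cases h1 : (l : ℕ) = (i : ℕ) + m
        · exact absurd (Fin.ext h1) hl
        · simp [h1]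
      · intro habs; exact absurd (Finset.mem_univ _) habs
    · rw [if_neg hc]
      apply Finset.sum_eq_zero
      intro l _
      rw [ih, shiftM]
      by_cases h1 : (l : ℕ) = (i : ℕ) + m
      · have : ¬ ((j : ℕ) = (l : ℕ) + 1) := by omega
        simp [this]
      · simp [h1]

lemma aeval_shiftM_apply (n : ℕ) (p : ℝ[X]) (i j : Fin n) :
    (Polynomial.aeval (shiftM n) p) i j
      = if (i : ℕ) ≤ (j : ℕ) then p.coeff ((j : ℕ) - (i : ℕ)) else 0 := by
  rw [Polynomial.aeval_eq_sum_range]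
  rw [Matrix.sum_apply]
  simp only [Matrix.smul_apply, shiftM_pow_apply, smul_eq_mul]
  by_cases hij : (i : ℕ) ≤ (j : ℕ)
  · rw [if_pos hij]
    have hcond : ∀ m, ((j : ℕ) = (i : ℕ) + m) ↔ (m = (j : ℕ) - (i : ℕ)) := by
      intro m; omega
    calc (∑ m ∈ Finset.range (p.natDegree + 1),
            p.coeff m * if (j : ℕ) = (i : ℕ) + m then 1 else 0)
        = ∑ m ∈ Finset.range (p.natDegree + 1),
            (if m = (j : ℕ) - (i : ℕ) then p.coeff m else 0) := by
          apply Finset.sum_congr rfl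
          intro m _
          rw [if_congr (hcond m) rfl rfl]
          split_ifs with hh
          · subst hh; ring
          · ring
      _ = if (j : ℕ) - (i : ℕ) ∈ Finset.range (p.natDegree + 1)
            then p.coeff ((j : ℕ) - (i : ℕ)) else 0 := Finset.sum_ite_eq' _ _ _
      _ = p.coeff ((j : ℕ) - (i : ℕ)) := by
          split_ifs with hm
          · rfl
          · rw [Finset.mem_range, not_lt] at hm
            exact (Polynomial.coeff_eq_zero_of_natDegree_lt (by omega)).symm
  · rw [if_neg hij]
    apply Finset.sum_eq_zero
    intro m _
    have : ¬ ((j : ℕ) = (i : ℕ) + m) := by omega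
    simp [this]


lemma coeff_one_add_pow (a : ℝ) (m i : ℕ) :
    (((1 : ℝ[X]) + C a * X) ^ m).coeff i = (m.choose i : ℝ) * a ^ i := by
  rw [add_comm, add_pow, Polynomial.finset_sum_coeff]
  have hterm : ∀ k ∈ Finset.range (m+1),
      ((C a * X) ^ k * 1 ^ (m - k) * (m.choose k : ℝ[X])).coeff i
        = if k = i then (m.choose i : ℝ) * a ^ i else 0 := by
    intro k _
    rw [one_pow, mul_one, mul_pow, ← Polynomial.C_pow, ← Polynomial.C_eq_natCast,
        Polynomial.coeff_mul_C, Polynomial.coeff_C_mul, Polynomial.coeff_X_pow]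
    by_cases hk : k = i
    · subst hk; simp [mul_comm]
    · simp [Ne.symm hk, hk]
  rw [Finset.sum_congr rfl hterm, Finset.sum_ite_eq' (Finset.range (m+1)) i]
  split_ifs with hi
  · rfl
  · rw [Finset.mem_range, not_lt] at hi
    rw [Nat.choose_eq_zero_of_lt (by omega)]
    simp

lemma coeff_q_pow (a b : ℝ) (k d : ℕ) :
    (((1 : ℝ[X]) + C a * X + C b * X ^ 2) ^ k).coeff d
      = ∑ j ∈ Finset.range (k+1),
          (if 2 * j ≤ d then
            (((k - j).choose (d - 2 * j) : ℝ) * a ^ (d - 2 * j) * (b ^ j * (k.choose j : ℝ)))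
          else 0) := by
  have hq : ((1 : ℝ[X]) + C a * X + C b * X ^ 2) = C b * X ^ 2 + (1 + C a * X) := by ring
  rw [hq, add_pow, Polynomial.finset_sum_coeff]
  apply Finset.sum_congr rfl
  intro j _
  have hre : (C b * X ^ 2) ^ j * (1 + C a * X) ^ (k - j) * ((k.choose j : ℕ) : ℝ[X])
      = C (b ^ j * (k.choose j : ℝ)) * (X ^ (2 * j) * (1 + C a * X) ^ (k - j)) := by
    rw [mul_pow, ← Polynomial.C_pow, ← pow_mul, ← Polynomial.C_eq_natCast, Polynomial.C_mul]
    ring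
  rw [hre, Polynomial.coeff_C_mul, Polynomial.coeff_X_pow_mul']
  split_ifs with h2j
  · rw [coeff_one_add_pow]; ring
  · ring




lemma eventually_coeff_q_pow_nonneg (a b : ℝ) (ha : 0 < a) (n : ℕ) :
    ∃ k₀ : ℕ, 0 < k₀ ∧ ∀ k, k₀ ≤ k → ∀ d, d < n →
      0 ≤ (((1 : ℝ[X]) + C a * X + C b * X ^ 2) ^ k).coeff d := by
  set M : ℝ := (|b| + 1) ^ n * (a + 1) ^ n with hMdef
  have hM : 0 ≤ M := by positivity
  have hmin : (0:ℝ) < min a 1 := lt_min ha one_pos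
  set c' : ℝ := (min a 1) ^ n / (2 ^ n * (n.factorial : ℝ)) with hc'def
  have hc' : 0 < c' := by positivity
  set K : ℝ := (n : ℝ) * M / c' with hKdef
  have hK : 0 ≤ K := by positivity
  refine ⟨max (2 * n + 1) (⌈K⌉₊ + 1), by positivity, ?_⟩
  intro k hk d hdn
  have hk1 : 2 * n + 1 ≤ k := le_trans (le_max_left _ _) hk
  have hkK : K < (k : ℝ) := by
    have h2 : (⌈K⌉₊ + 1 : ℕ) ≤ k := le_trans (le_max_right _ _) hk
    have := Nat.le_ceil K
    have h3 : ((⌈K⌉₊ + 1 : ℕ) : ℝ) ≤ (k : ℝ) := by exact_mod_cast h2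
    push_cast at h3
    linarith
  have hkpos : (0:ℝ) < k := lt_of_le_of_lt hK hkK
  have hk1' : (1:ℝ) ≤ k := by
    have : 1 ≤ k := by omega
    exact_mod_cast this
  rw [coeff_q_pow, Finset.sum_range_succ']
  set Q : ℝ := M * (k : ℝ) ^ (d - 1) with hQdef
  have hQ : 0 ≤ Q := by positivity
  -- termwise lower bound
  have hterm : ∀ j ∈ Finset.range k,
      -(if j < d then Q else 0) ≤
        (if 2 * (j+1) ≤ d then
          (((k - (j+1)).choose (d - 2 * (j+1)) : ℝ) * a ^ (d - 2 * (j+1)) *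
            (b ^ (j+1) * (k.choose (j+1) : ℝ)))
        else 0) := by
    intro j _
    by_cases h2j : 2 * (j + 1) ≤ d
    · have hjd : j < d := by omega
      rw [if_pos h2j, if_pos hjd]
      set e : ℕ := d - 2 * (j + 1) with hedef
      set T : ℝ := ((k - (j+1)).choose e : ℝ) * a ^ e * (b ^ (j+1) * (k.choose (j+1) : ℝ))
        with hT
      have habs : |T| = ((k - (j+1)).choose e : ℝ) * a ^ e * (|b| ^ (j+1) * (k.choose (j+1) : ℝ)) := by
        rw [hT, abs_mul, abs_mul, abs_mul, abs_pow, abs_pow, abs_of_nonneg ha.le,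
          Nat.abs_cast, Nat.abs_cast]
      have hb1 : ((k - (j+1)).choose e : ℝ) ≤ (k:ℝ) ^ e := by
        have h1 : (k - (j+1)).choose e ≤ k ^ e :=
          le_trans (Nat.choose_le_pow _ _) (Nat.pow_le_pow_left (Nat.sub_le _ _) _)
        exact_mod_cast h1
      have hb2 : (k.choose (j+1) : ℝ) ≤ (k:ℝ) ^ (j+1) := by exact_mod_cast Nat.choose_le_pow k (j+1)
      have hb3 : a ^ e ≤ (a + 1) ^ n := by
        calc a ^ e ≤ (a+1) ^ e := by gcongr; linarith
          _ ≤ (a+1) ^ n := by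
            apply pow_le_pow_right₀ (by linarith)
            omega
      have hb4 : |b| ^ (j+1) ≤ (|b| + 1) ^ n := by
        calc |b| ^ (j+1) ≤ (|b|+1) ^ (j+1) := by gcongr; linarith [abs_nonneg b]
          _ ≤ (|b|+1) ^ n := by
            apply pow_le_pow_right₀ (by linarith [abs_nonneg b])
            omega
      have hbound : |T| ≤ Q := by
        rw [habs]
        calc ((k - (j+1)).choose e : ℝ) * a ^ e * (|b| ^ (j+1) * (k.choose (j+1) : ℝ))
            ≤ (k:ℝ) ^ e * (a+1) ^ n * ((|b|+1) ^ n * (k:ℝ) ^ (j+1)) := by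
              gcongr <;> positivity
          _ = M * (k:ℝ) ^ (e + (j+1)) := by rw [pow_add]; ring
          _ ≤ M * (k:ℝ) ^ (d - 1) := by
              gcongr
              · omega
      linarith [neg_abs_le T, hbound]
    · rw [if_neg h2j]
      split_ifs with h
      · linarith
      · simp
  have hsumlb : -((d:ℝ) * Q) ≤ ∑ j ∈ Finset.range k,
      (if 2 * (j+1) ≤ d then
        (((k - (j+1)).choose (d - 2 * (j+1)) : ℝ) * a ^ (d - 2 * (j+1)) *
          (b ^ (j+1) * (k.choose (j+1) : ℝ)))
      else 0) := by
    have h1 := Finset.sum_le_sum hterm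
    have h2 : ∑ j ∈ Finset.range k, -(if j < d then Q else 0)
        = -((d:ℝ) * Q) := by
      rw [Finset.sum_neg_distrib]
      congr 1
      have hdk : d ≤ k := by omega
      rw [← Finset.sum_subset (Finset.range_subset_range.mpr hdk)
        (fun x _ hx => if_neg (by simpa using hx))]
      rw [Finset.sum_congr rfl (fun x hx => if_pos (Finset.mem_range.mp hx))]
      rw [Finset.sum_const, Finset.card_range, nsmul_eq_mul]
    linarith [h1, h2.symm.le, h2.le]
  -- j = 0 term
  have hzero : (if 2 * 0 ≤ d then
      (((k - 0).choose (d - 2 * 0) : ℝ) * a ^ (d - 2 * 0) * (b ^ 0 * (k.choose 0 : ℝ)))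
      else 0) = (k.choose d : ℝ) * a ^ d := by
    norm_num
  -- main comparison
  have hmain : (d:ℝ) * Q ≤ (k.choose d : ℝ) * a ^ d := by
    rcases Nat.eq_zero_or_pos d with hd0 | hd1
    · subst hd0
      simp only [Nat.cast_zero, zero_mul, Nat.choose_zero_right, Nat.cast_one, pow_zero, mul_one]
      norm_num
    · -- binomial lower bound
      have hhalf : (k:ℝ)/2 ≤ ((k + 1 - d : ℕ) : ℝ) := by
        have hdk1 : d ≤ k + 1 := by omega
        have hcast : ((k + 1 - d : ℕ) : ℝ) = (k:ℝ) + 1 - d := by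
          push_cast [hdk1]; ring
        rw [hcast]
        have hd : (d:ℝ) ≤ n := by exact_mod_cast hdn.le
        have hkr : (2 * n + 1 : ℝ) ≤ k := by exact_mod_cast hk1
        linarith
      have hchoose : ((k:ℝ)/2) ^ d / (n.factorial : ℝ) ≤ (k.choose d : ℝ) := by
        calc ((k:ℝ)/2) ^ d / (n.factorial : ℝ)
            ≤ ((k + 1 - d : ℕ) : ℝ) ^ d / (d.factorial : ℝ) := by
              gcongr <;> first
                | positivity
                | exact hhalf
                | exact_mod_cast Nat.factorial_pos d
                | exact_mod_cast Nat.factorial_le (by omega : d ≤ n)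
          _ ≤ (k.choose d : ℝ) := by
              have := Nat.pow_le_choose (α := ℝ) d k
              push_cast at this
              exact this
      have hcn : (min a 1) ^ n ≤ a ^ d := by
        calc (min a 1) ^ n ≤ (min a 1) ^ d := by
              apply pow_le_pow_of_le_one hmin.le (min_le_right a 1)
              omega
          _ ≤ a ^ d := by
              apply pow_le_pow_left₀ hmin.le (min_le_left a 1)
      have hstep1 : c' * ((k:ℝ) ^ d) ≤ (k.choose d : ℝ) * a ^ d := by
        calc c' * ((k:ℝ) ^ d)
            = ((k:ℝ)^d / (2 ^ n * (n.factorial : ℝ))) * (min a 1) ^ n := by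
              rw [hc'def]; ring
          _ ≤ ((k:ℝ)^d / (2 ^ d * (n.factorial : ℝ))) * (min a 1) ^ n := by
              gcongr
              exact one_le_two
          _ = (((k:ℝ)/2) ^ d / (n.factorial : ℝ)) * (min a 1) ^ n := by
              rw [div_pow]; ring
          _ ≤ (k.choose d : ℝ) * a ^ d := by
              have h9 : (0:ℝ) ≤ ((k:ℝ)/2) ^ d / (n.factorial : ℝ) := by positivity
              exact mul_le_mul hchoose hcn (by positivity) (Nat.cast_nonneg _)
      have hkd : (k:ℝ) ^ d = (k:ℝ) * (k:ℝ) ^ (d - 1) := by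
        conv_lhs => rw [show d = (d-1) + 1 by omega]
        rw [pow_succ]; ring
      have hstep2 : (d:ℝ) * Q ≤ c' * ((k:ℝ) ^ d) := by
        rw [hQdef, hkd]
        have hdM : (d:ℝ) * M ≤ c' * (k:ℝ) := by
          have h1 : (d:ℝ) * M ≤ (n:ℝ) * M := by
            gcongr <;> first
              | positivity
              | exact_mod_cast hdn.le
          have h2 : c' * K = (n:ℝ) * M := by
            rw [hKdef]
            field_simp
          have h3 : c' * K ≤ c' * (k:ℝ) := by
            gcongr
          linarith
        calc (d:ℝ) * (M * (k:ℝ)^(d-1)) = ((d:ℝ) * M) * (k:ℝ)^(d-1) := by ring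
          _ ≤ (c' * (k:ℝ)) * (k:ℝ)^(d-1) := by
              have := pow_nonneg hkpos.le (d-1)
              exact mul_le_mul_of_nonneg_right hdM this
          _ = c' * ((k:ℝ) * (k:ℝ)^(d-1)) := by ring
      linarith
  rw [hzero]
  linarith


lemma spectrum_triangular_one (n : ℕ) (hn : 1 ≤ n) (Bc : Matrix (Fin n) (Fin n) ℂ)
    (hd : ∀ i, Bc i i = 1) (hl : ∀ i j : Fin n, (j:ℕ) < (i:ℕ) → Bc i j = 0) :
    spectrum ℂ Bc = {1} := by
  ext μ
  rw [spectrum.mem_iff, Set.mem_singleton_iff]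
  have htri : ((algebraMap ℂ (Matrix (Fin n) (Fin n) ℂ)) μ - Bc).BlockTriangular id := by
    intro i j hij
    have hji : (j:ℕ) < (i:ℕ) := hij
    rw [Matrix.sub_apply, Matrix.algebraMap_matrix_apply,
      if_neg (fun hij' => by subst hij'; exact lt_irrefl _ hji), hl i j hji, sub_zero]
  have hdet : ((algebraMap ℂ (Matrix (Fin n) (Fin n) ℂ)) μ - Bc).det = (μ - 1) ^ n := by
    rw [Matrix.det_of_upperTriangular htri]
    have hdiag : ∀ i : Fin n, ((algebraMap ℂ (Matrix (Fin n) (Fin n) ℂ)) μ - Bc) i i = μ - 1 := by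
      intro i
      rw [Matrix.sub_apply, Matrix.algebraMap_matrix_apply, if_pos rfl, hd]
      simp
    rw [Finset.prod_congr rfl (fun i _ => hdiag i), Finset.prod_const, Finset.card_univ,
      Fintype.card_fin]
  rw [Matrix.isUnit_iff_isUnit_det, hdet, isUnit_iff_ne_zero, not_ne_iff,
    pow_eq_zero_iff (by omega : n ≠ 0), sub_eq_zero]

end Aux

/-- Lemma 2: with `A^F_2` the second-order one-sided forward difference matrix, the
matrix `A = ν•I - A^F_2` (`ν > 0`, `h > 0`) is an EM-matrix: it can be written as
`A = s•I - B` with `s > 0`, `B` eventually nonnegative, and `0 < ρ(B) < s`. -/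
theorem stmt_13 (n : ℕ) (hn : 1 ≤ n) (ν h : ℝ) (hν : 0 < ν) (hh : 0 < h) :
    let AF2 : Matrix (Fin n) (Fin n) ℝ := Matrix.of fun i j =>
      if i = j then -(3 / (2 * h))
      else if (j : ℕ) = (i : ℕ) + 1 then 2 / h
      else if (j : ℕ) = (i : ℕ) + 2 then -(1 / (2 * h))
      else 0
    let A : Matrix (Fin n) (Fin n) ℝ := ν • (1 : Matrix (Fin n) (Fin n) ℝ) - AF2
    ∃ (s : ℝ) (B : Matrix (Fin n) (Fin n) ℝ), 0 < s ∧
      A = s • (1 : Matrix (Fin n) (Fin n) ℝ) - B ∧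
      (∃ k₀ : ℕ, 0 < k₀ ∧ ∀ k ≥ k₀, ∀ i j, 0 ≤ (B ^ k) i j) ∧
      0 < specRad B ∧ specRad B < s := by
  intro AF2 A
  set a : ℝ := 2 / h with hadef
  set b : ℝ := -(1 / (2 * h)) with hbdef
  have ha : 0 < a := by positivity
  set s : ℝ := ν + 3 / (2 * h) + 1 with hsdef
  have hs3 : (0:ℝ) < 3 / (2 * h) := by positivity
  set q : ℝ[X] := 1 + C a * X + C b * X ^ 2 with hqdef
  set B : Matrix (Fin n) (Fin n) ℝ := Polynomial.aeval (shiftM n) q with hBdef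
  -- coefficients of q
  have hc0 : q.coeff 0 = 1 := by simp [hqdef]
  have hc1 : q.coeff 1 = a := by simp [hqdef, Polynomial.coeff_one]
  have hc2 : q.coeff 2 = b := by simp [hqdef, Polynomial.coeff_one, Polynomial.coeff_X]
  have hcm : ∀ m : ℕ, 3 ≤ m → q.coeff m = 0 := by
    intro m hm
    simp only [hqdef, Polynomial.coeff_add, Polynomial.coeff_one, Polynomial.coeff_C_mul,
      Polynomial.coeff_X, Polynomial.coeff_X_pow]
    rw [if_neg (by omega), if_neg (by omega), if_neg (by omega)]
    ring
  have hBapply : ∀ i j : Fin n, B i j =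
      if (i:ℕ) ≤ (j:ℕ) then q.coeff ((j:ℕ) - (i:ℕ)) else 0 := fun i j =>
    aeval_shiftM_apply n q i j
  refine ⟨s, B, by positivity, ?_, ?_, ?_, ?_⟩
  · -- A = s • 1 - B
    ext i j
    simp only [A, AF2, Matrix.sub_apply, Matrix.smul_apply, Matrix.one_apply,
      Matrix.of_apply, smul_eq_mul]
    rw [hBapply i j]
    by_cases h1 : i = j
    · subst h1
      rw [if_pos rfl, if_pos rfl, if_pos (le_refl _)]
      simp only [Nat.sub_self, hc0]
      rw [hsdef]; ring
    · have h1' : ¬ (i:ℕ) = (j:ℕ) := fun hh => h1 (Fin.ext hh)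
      rw [if_neg h1, if_neg h1]
      by_cases h2 : (j:ℕ) = (i:ℕ) + 1
      · rw [if_pos h2, if_pos (by omega), show (j:ℕ) - (i:ℕ) = 1 by omega, hc1]
        ring
      · rw [if_neg h2]
        by_cases h3 : (j:ℕ) = (i:ℕ) + 2
        · rw [if_pos h3, if_pos (by omega), show (j:ℕ) - (i:ℕ) = 2 by omega, hc2, hbdef]
          ring
        · rw [if_neg h3]
          by_cases h4 : (i:ℕ) ≤ (j:ℕ)
          · rw [if_pos h4, hcm ((j:ℕ) - (i:ℕ)) (by omega)]
            ring
          · rw [if_neg h4]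
            ring
  · -- eventual nonnegativity
    obtain ⟨k₀, hk₀, hcoef⟩ := eventually_coeff_q_pow_nonneg a b ha n
    refine ⟨k₀, hk₀, ?_⟩
    intro k hk i j
    have hBk : (B ^ k) i j = if (i:ℕ) ≤ (j:ℕ) then (q ^ k).coeff ((j:ℕ) - (i:ℕ)) else 0 := by
      rw [hBdef, ← map_pow, aeval_shiftM_apply]
    rw [hBk]
    by_cases h4 : (i:ℕ) ≤ (j:ℕ)
    · rw [if_pos h4]
      exact hcoef k hk _ (by omega)
    · rw [if_neg h4]
  · -- 0 < specRad B
    have hspec : spectrum ℂ (B.map Complex.ofReal) = {1} := by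
      apply spectrum_triangular_one n hn
      · intro i
        rw [Matrix.map_apply, hBapply i i, if_pos (le_refl _), Nat.sub_self, hc0]
        simp
      · intro i j hji
        rw [Matrix.map_apply, hBapply i j, if_neg (by omega)]
        simp
    have hsr : specRad B = 1 := by
      rw [specRad, hspec, Set.image_singleton, csSup_singleton]
      simp
    rw [hsr]; norm_num
  · have hspec : spectrum ℂ (B.map Complex.ofReal) = {1} := by
      apply spectrum_triangular_one n hn
      · intro i
        rw [Matrix.map_apply, hBapply i i, if_pos (le_refl _), Nat.sub_self, hc0]
        simp
      · intro i j hji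
        rw [Matrix.map_apply, hBapply i j, if_neg (by omega)]
        simp
    have hsr : specRad B = 1 := by
      rw [specRad, hspec, Set.image_singleton, csSup_singleton]
      simp
    rw [hsr, hsdef]
    linarith
end

section
/- Let n ≥ 1, ν > 0 and h > 0 with h·ν ≤ 1, and let M₁ be the n×n tridiagonal Toeplitz matrix with ν² − 2/h² on the main diagonal, ν/h + 1/h² on the first subdiagonal, and −ν/h + 1/h² on the first superdiagonal (zeros elsewhere); M₁ is the discretization A^C_2 + ν²·I − 2ν·A^C of the operator (ν − ∇)² by central differences. Then M₁ is the negative of an M-matrix: all off-diagonal entries of M₁ are nonnegative (M₁ is Metzler) and every complex eigenvalue of M₁ has strictly negative real part. (This is the first step in the proof of Proposition 6 for the CGMY model with 1 < α_R < 2.) -/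
open Matrix

private lemma sum_ite_le {α : Type*} [DecidableEq α] (s : Finset α)
    (p q : α → Prop) [DecidablePred p] [DecidablePred q]
    (hp : ∀ a b, p a → p b → a = b) (hq : ∀ a b, q a → q b → a = b)
    (C D : ℝ) (hC : 0 ≤ C) (hD : 0 ≤ D) (f : α → ℝ)
    (hf : ∀ a ∈ s, f a ≤ (if p a then C else 0) + (if q a then D else 0)) :
    ∑ a ∈ s, f a ≤ C + D := by
  have h1 : ∑ a ∈ s, (if p a then C else 0) ≤ C := by
    rw [← Finset.sum_filter]
    rcases Finset.eq_empty_or_nonempty (s.filter p) with he | hne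
    · simp [he, hC]
    · obtain ⟨a, ha⟩ := hne
      have : s.filter p = {a} := by
        apply Finset.eq_singleton_iff_unique_mem.mpr
        exact ⟨ha, fun b hb => hp b a (Finset.mem_filter.mp hb).2 (Finset.mem_filter.mp ha).2⟩
      simp [this]
  have h2 : ∑ a ∈ s, (if q a then D else 0) ≤ D := by
    rw [← Finset.sum_filter]
    rcases Finset.eq_empty_or_nonempty (s.filter q) with he | hne
    · simp [he, hD]
    · obtain ⟨a, ha⟩ := hne
      have : s.filter q = {a} := by
        apply Finset.eq_singleton_iff_unique_mem.mpr
        exact ⟨ha, fun b hb => hq b a (Finset.mem_filter.mp hb).2 (Finset.mem_filter.mp ha).2⟩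
      simp [this]
  calc ∑ a ∈ s, f a ≤ ∑ a ∈ s, ((if p a then C else 0) + (if q a then D else 0)) :=
        Finset.sum_le_sum hf
    _ = (∑ a ∈ s, (if p a then C else 0)) + ∑ a ∈ s, (if q a then D else 0) :=
        Finset.sum_add_distrib
    _ ≤ C + D := add_le_add h1 h2

/-- First step in the proof of Proposition 6 for the CGMY model with `1 < α_R < 2`:
the central-difference discretization `M₁ = A^C_2 + ν²•I - 2ν•A^C` of `(ν - ∇)²`,
i.e. the tridiagonal Toeplitz matrix with `ν² - 2/h²` on the diagonal, `ν/h + 1/h²`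
on the subdiagonal and `-ν/h + 1/h²` on the superdiagonal, is (given `h·ν ≤ 1`) the
negative of an M-matrix: it is Metzler (nonnegative off-diagonal entries) and all of
its complex eigenvalues have strictly negative real part. -/
theorem stmt_15 (n : ℕ) (hn : 1 ≤ n) (ν h : ℝ) (hν : 0 < ν) (hh : 0 < h)
    (hhν : h * ν ≤ 1) :
    let M₁ : Matrix (Fin n) (Fin n) ℝ := Matrix.of fun i j =>
      if i = j then ν ^ 2 - 2 / h ^ 2
      else if (i : ℕ) = (j : ℕ) + 1 then ν / h + 1 / h ^ 2
      else if (j : ℕ) = (i : ℕ) + 1 then -(ν / h) + 1 / h ^ 2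
      else 0
    (∀ i j, i ≠ j → 0 ≤ M₁ i j) ∧
      ∀ μ ∈ spectrum ℂ (M₁.map Complex.ofReal), μ.re < 0 := by
  intro M₁
  have hh2 : 0 < h ^ 2 := by positivity
  have hb' : 0 < ν / h + 1 / h ^ 2 := by positivity
  have hc' : 0 ≤ -(ν / h) + 1 / h ^ 2 := by
    have : ν / h ≤ 1 / h ^ 2 := by
      rw [div_le_div_iff₀ hh hh2]; nlinarith
    linarith
  have hhν2 : (h * ν) ^ 2 ≤ 1 := by
    nlinarith [mul_nonneg (by linarith : (0:ℝ) ≤ 1 - h * ν) (le_of_lt (mul_pos hh hν))]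
  have hK' : 0 < 2 / h ^ 2 - ν ^ 2 := by
    have h2 : ν ^ 2 ≤ 1 / h ^ 2 := by
      rw [le_div_iff₀ hh2]; nlinarith
    have h3 : 2 / h ^ 2 = 1 / h ^ 2 + 1 / h ^ 2 := by ring
    have h4 : 0 < 1 / h ^ 2 := by positivity
    linarith
  have hKey' : 4 * (ν / h + 1 / h ^ 2) * (-(ν / h) + 1 / h ^ 2)
      < (2 / h ^ 2 - ν ^ 2) ^ 2 := by
    have e : (2 / h ^ 2 - ν ^ 2) ^ 2
        - 4 * (ν / h + 1 / h ^ 2) * (-(ν / h) + 1 / h ^ 2) = ν ^ 4 := by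
      field_simp
      ring
    nlinarith [pow_pos hν 4]
  set b : ℝ := ν / h + 1 / h ^ 2 with hb_def
  set c : ℝ := -(ν / h) + 1 / h ^ 2 with hc_def
  set K : ℝ := 2 / h ^ 2 - ν ^ 2 with hK_def
  have hb : 0 < b := hb'
  have hc : 0 ≤ c := hc'
  have hK : 0 < K := hK'
  have hKey : 4 * b * c < K ^ 2 := hKey'
  clear_value b c K
  constructor
  · intro i j hij
    show (0:ℝ) ≤ M₁ i j
    simp only [M₁, of_apply]
    rw [if_neg hij]
    split_ifs with h1 h2
    · rw [← hb_def] at *; linarith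
    · rw [← hc_def] at *; linarith
    · exact le_refl 0
  · intro μ hμ
    set s : ℝ := K / (2 * b) with hs_def
    have hs : 0 < s := by positivity
    clear_value s
    have hsne : (s : ℂ) ≠ 0 := by exact_mod_cast hs.ne'
    set d : Fin n → ℂ := fun i => (s : ℂ) ^ (i : ℕ) with hd_def
    have hd : ∀ i, d i ≠ 0 := fun i => pow_ne_zero _ hsne
    set A : Matrix (Fin n) (Fin n) ℂ := M₁.map Complex.ofReal with hA_def
    -- the conjugating unit
    have hmul : diagonal d * diagonal (fun i => (d i)⁻¹) = 1 := by
      rw [diagonal_mul_diagonal]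
      rw [show (fun i => d i * (d i)⁻¹) = fun _ => (1:ℂ) from
        funext fun i => mul_inv_cancel₀ (hd i)]
      exact diagonal_one
    have hmul' : diagonal (fun i => (d i)⁻¹) * diagonal d = 1 := by
      rw [diagonal_mul_diagonal]
      rw [show (fun i => (d i)⁻¹ * d i) = fun _ => (1:ℂ) from
        funext fun i => inv_mul_cancel₀ (hd i)]
      exact diagonal_one
    set u : (Matrix (Fin n) (Fin n) ℂ)ˣ :=
      ⟨diagonal d, diagonal (fun i => (d i)⁻¹), hmul, hmul'⟩ with hu_def
    set B : Matrix (Fin n) (Fin n) ℂ :=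
      (u : Matrix (Fin n) (Fin n) ℂ) * A * ((u⁻¹ : (Matrix (Fin n) (Fin n) ℂ)ˣ) :
        Matrix (Fin n) (Fin n) ℂ) with hB_def
    have hμB : μ ∈ spectrum ℂ B := by
      rw [hB_def, spectrum.units_conjugate]; exact hμ
    have hBentry : ∀ i j, B i j = d i * A i j * (d j)⁻¹ := by
      intro i j
      rw [hB_def]
      have : (↑u⁻¹ : Matrix (Fin n) (Fin n) ℂ) = diagonal (fun i => (d i)⁻¹) := rfl
      rw [this]
      rw [Matrix.mul_diagonal, Matrix.diagonal_mul]
    have hev : Module.End.HasEigenvalue (Matrix.toLin' B) μ := by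
      rw [Module.End.hasEigenvalue_iff_mem_spectrum]
      rwa [show Matrix.toLin' B = Matrix.toLinAlgEquiv' B from rfl, AlgEquiv.spectrum_eq]
    obtain ⟨k, hk⟩ := eigenvalue_mem_ball hev
    rw [Metric.mem_closedBall, dist_eq_norm] at hk
    have hBkk : B k k = ((ν ^ 2 - 2 / h ^ 2 : ℝ) : ℂ) := by
      rw [hBentry k k]
      have hA : A k k = ((ν ^ 2 - 2 / h ^ 2 : ℝ) : ℂ) := by
        simp [hA_def, M₁]
      rw [hA, mul_comm (d k), mul_assoc, mul_inv_cancel₀ (hd k), mul_one]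
    -- bound the radius
    have hradius : ∑ j ∈ Finset.univ.erase k, ‖B k j‖ ≤ s * b + c / s := by
      apply sum_ite_le _ (fun j : Fin n => (k : ℕ) = (j : ℕ) + 1)
        (fun j : Fin n => (j : ℕ) = (k : ℕ) + 1)
      · intro a b' ha hb'
        exact Fin.ext (by omega)
      · intro a b' ha hb'
        exact Fin.ext (by omega)
      · positivity
      · positivity
      · intro j hj
        have hjk : j ≠ k := Finset.ne_of_mem_erase hj
        rw [hBentry k j]
        have hAkj : A k j = ((M₁ k j : ℝ) : ℂ) := rfl
        by_cases h1 : (k : ℕ) = (j : ℕ) + 1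
        · have hM : M₁ k j = b := by
            simp only [M₁, of_apply]
            rw [if_neg (Ne.symm hjk), if_pos h1]
            exact hb_def.symm
          rw [hAkj, hM, if_pos h1, if_neg, add_zero]
          · rw [hd_def]
            simp only [norm_mul, norm_inv, norm_pow, Complex.norm_real,
              Real.norm_eq_abs, abs_of_pos hs]
            rw [h1, pow_succ, abs_of_pos hb]
            apply le_of_eq
            field_simp [pow_ne_zero (j : ℕ) hs.ne']
          · omega
        · by_cases h2 : (j : ℕ) = (k : ℕ) + 1
          swap
          · have hM : M₁ k j = 0 := by
              simp only [M₁, of_apply]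
              rw [if_neg (Ne.symm hjk), if_neg h1, if_neg h2]
            rw [hAkj, hM, if_neg h1, if_neg h2]
            simp only [Complex.ofReal_zero, mul_zero, zero_mul, norm_zero, add_zero]
            exact le_refl 0
          have hM : M₁ k j = c := by
            simp only [M₁, of_apply]
            rw [if_neg (Ne.symm hjk), if_neg h1, if_pos h2]
            exact hc_def.symm
          rw [hAkj, hM, if_neg h1, if_pos h2, zero_add]
          rw [hd_def]
          simp only [norm_mul, norm_inv, norm_pow, Complex.norm_real,
            Real.norm_eq_abs, abs_of_pos hs]
          rw [h2, pow_succ, abs_of_nonneg hc]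
          apply le_of_eq
          field_simp [pow_ne_zero (k : ℕ) hs.ne']
    -- conclude
    have hre : μ.re - (ν ^ 2 - 2 / h ^ 2) ≤ ‖μ - B k k‖ := by
      calc μ.re - (ν ^ 2 - 2 / h ^ 2) = (μ - B k k).re := by
            rw [Complex.sub_re, hBkk, Complex.ofReal_re]
        _ ≤ ‖μ - B k k‖ := by
            exact Complex.re_le_norm _
    have hfinal : μ.re ≤ (ν ^ 2 - 2 / h ^ 2) + (s * b + c / s) := by
      have := le_trans hre (le_trans hk hradius)
      linarith
    have hsb : s * b = K / 2 := by
      rw [hs_def]; field_simp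
    have hcs : c / s = 2 * b * c / K := by
      rw [hs_def, div_div_eq_mul_div]; ring
    have hlt : 2 * b * c / K < K / 2 := by
      rw [div_lt_iff₀ hK]
      nlinarith
    have hνK : ν ^ 2 - 2 / h ^ 2 = -K := by rw [hK_def]; ring
    rw [hsb, hcs, hνK] at hfinal
    linarith
end
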